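/- arXiv:1803.00434 — 9 statements merged into one kernel-verified Lean document; each statement's English description precedes it below -/
import Mathlib

section
/- Let G be a transitive subgroup of the symmetric group S_n that contains a transposition. If G contains a p-cycle for some prime p with p > n/2, then G = S_n. -/
open Equiv

/-- Lemma 2.2(ii): a transitive subgroup of `S_n` containing a transposition and a
`p`-cycle for a prime `p > n/2` is all of `S_n`. -/
theorem transitive_subgroup_with_transposition_and_large_prime_cycle_eq_top
    (n : ℕ) (G : Subgroup (Equiv.Perm (Fin n)))
    (htrans : ∀ x y : Fin n, ∃ g ∈ G, g x = y)
    (hswap : ∃ g ∈ G, Equiv.Perm.IsSwap g)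
    (hcycle : ∃ g ∈ G, ∃ p : ℕ, p.Prime ∧ n < 2 * p ∧ g.IsCycle ∧ g.support.card = p) :
    G = ⊤ := by
  classical
  obtain ⟨σ, hσG, p, hp, hnp, hσcyc, hσcard⟩ := hcycle
  obtain ⟨τ, hτG, a, b, hab, rfl⟩ := hswap
  set S : Set (Perm (Fin n)) := {f | f.IsSwap ∧ f ∈ G} with hSdef
  set H := Subgroup.closure S with hHdef
  have hHG : H ≤ G := (Subgroup.closure_le G).mpr fun f hf => hf.2
  -- G normalizes H
  have hconj : ∀ g ∈ G, ∀ h ∈ H, g * h * g⁻¹ ∈ H := by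
    intro g hg h hh
    refine Subgroup.closure_induction ?_ ?_ ?_ ?_ hh
    · rintro f ⟨⟨x, y, hxy, rfl⟩, hfG⟩
      have hkey : g * Equiv.swap x y * g⁻¹ = Equiv.swap (g x) (g y) :=
        (Equiv.swap_apply_apply g x y).symm
      rw [hkey]
      exact Subgroup.subset_closure
        ⟨⟨g x, g y, g.injective.ne hxy, rfl⟩,
          hkey ▸ mul_mem (mul_mem hg hfG) (inv_mem hg)⟩
    · simpa using one_mem H
    · intro x y _ _ hx hy
      have : g * (x * y) * g⁻¹ = (g * x * g⁻¹) * (g * y * g⁻¹) := by group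
      rw [this]; exact mul_mem hx hy
    · intro x _ hx
      have : g * x⁻¹ * g⁻¹ = (g * x * g⁻¹)⁻¹ := by group
      rw [this]; exact inv_mem hx
  -- orbits of H
  set O : Fin n → Set (Fin n) := fun x => {y | ∃ h ∈ H, h x = y} with hOdef
  have hmemO : ∀ x, x ∈ O x := fun x => ⟨1, one_mem H, rfl⟩
  have hOeq : ∀ {x y : Fin n}, y ∈ O x → O y = O x := by
    rintro x y ⟨h, hh, rfl⟩
    ext z
    constructor
    · rintro ⟨k, hk, rfl⟩
      exact ⟨k * h, mul_mem hk hh, by simp [Perm.mul_apply]⟩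
    · rintro ⟨k, hk, rfl⟩
      exact ⟨k * h⁻¹, mul_mem hk (inv_mem hh), by simp [Perm.mul_apply]⟩
  have hOimg : ∀ g ∈ G, ∀ x, O (g x) = g '' O x := by
    intro g hg x
    ext z
    constructor
    · rintro ⟨h, hh, rfl⟩
      refine ⟨(g⁻¹ * h * g) x, ⟨g⁻¹ * h * g, ?_, rfl⟩, by simp [Perm.mul_apply]⟩
      simpa using hconj g⁻¹ (inv_mem hg) h hh
    · rintro ⟨w, ⟨h, hh, rfl⟩, rfl⟩
      exact ⟨g * h * g⁻¹, hconj g hg h hh, by simp [Perm.mul_apply]⟩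
  have hOcard : ∀ g ∈ G, ∀ x, (O (g x)).ncard = (O x).ncard := by
    intro g hg x
    rw [hOimg g hg x, Set.ncard_image_of_injective _ g.injective]
  have hcard_eq : ∀ x y : Fin n, (O x).ncard = (O y).ncard := by
    intro x y
    obtain ⟨g, hg, rfl⟩ := htrans x y
    exact (hOcard g hg x).symm
  -- every orbit has at least two elements
  have h2le : ∀ x, 2 ≤ (O x).ncard := by
    intro x
    rw [hcard_eq x a]
    have hbO : b ∈ O a := ⟨Equiv.swap a b, Subgroup.subset_closure ⟨⟨a, b, hab, rfl⟩, hτG⟩,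
      Equiv.swap_apply_left a b⟩
    have hsub : ({a, b} : Set (Fin n)) ⊆ O a :=
      Set.insert_subset (hmemO a) (Set.singleton_subset_iff.mpr hbO)
    calc 2 = ({a, b} : Set (Fin n)).ncard := (Set.ncard_pair hab).symm
      _ ≤ (O a).ncard := Set.ncard_le_ncard hsub (Set.toFinite _)
  have hord : orderOf σ = p := by rw [hσcyc.orderOf, hσcard]
  -- additivity of powers staying in the orbit
  have hpow_mem : ∀ (x : Fin n) (i j : ℕ), (σ ^ i) x ∈ O x → (σ ^ j) x ∈ O x →
      (σ ^ (i + j)) x ∈ O x := by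
    intro x i j hi hj
    have heq : (σ ^ (i + j)) x = (σ ^ i) ((σ ^ j) x) := by
      rw [pow_add, Perm.mul_apply]
    have hmem : (σ ^ i) ((σ ^ j) x) ∈ O ((σ ^ i) x) := by
      rw [hOimg (σ ^ i) (pow_mem hσG i) x]
      exact Set.mem_image_of_mem _ hj
    rw [heq, ← hOeq hi]
    exact hmem
  have hmul_mem : ∀ (x : Fin n) (i : ℕ), (σ ^ i) x ∈ O x → ∀ c : ℕ,
      (σ ^ (i * c)) x ∈ O x := by
    intro x i hi c
    induction c with
    | zero => simpa using hmemO x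
    | succ c ih => rw [Nat.mul_succ]; exact hpow_mem x (i * c) i ih hi
  -- Step A : σ preserves every orbit
  have hstepA : ∀ x, σ x ∈ O x := by
    intro x
    by_cases hex : ∃ i, 0 < i ∧ i < p ∧ (σ ^ i) x ∈ O x
    · obtain ⟨i, hi0, hip, hiO⟩ := hex
      have hcop : Nat.Coprime i p :=
        (Nat.Prime.coprime_iff_not_dvd hp).mpr (Nat.not_dvd_of_pos_of_lt hi0 hip) |>.symm
      obtain ⟨c, -, hc⟩ := Nat.exists_mul_mod_eq_one_of_coprime hcop hp.one_lt
      have hmem := hmul_mem x i hiO c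
      rwa [← pow_mod_orderOf, hord, hc, pow_one] at hmem
    · exfalso
      push_neg at hex
      -- the orbits of σ^i x, i < p, are pairwise disjoint
      have hdisj : ∀ i j : ℕ, i < j → j < p → Disjoint (O ((σ ^ i) x)) (O ((σ ^ j) x)) := by
        intro i j hij hjp
        rw [Set.disjoint_left]
        intro z hzi hzj
        have heq : O ((σ ^ i) x) = O ((σ ^ j) x) := (hOeq hzi).symm.trans (hOeq hzj)
        have hjmem : (σ ^ j) x ∈ O ((σ ^ i) x) := heq ▸ hmemO _
        rw [hOimg (σ ^ i) (pow_mem hσG i) x] at hjmem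
        obtain ⟨w, hw, hww⟩ := hjmem
        have hj' : (σ ^ j) x = (σ ^ i) ((σ ^ (j - i)) x) := by
          rw [← Perm.mul_apply, ← pow_add, Nat.add_sub_cancel' hij.le]
        have hweq : w = (σ ^ (j - i)) x := (σ ^ i).injective (by rw [hww, hj'])
        rw [hweq] at hw
        exact hex (j - i) (Nat.sub_pos_of_lt hij) (lt_of_le_of_lt (Nat.sub_le j i) hjp) hw
      -- cardinality contradiction
      set F : ℕ → Finset (Fin n) := fun i => (O ((σ ^ i) x)).toFinset with hFdef
      have hFcard : ∀ i, 2 ≤ (F i).card := by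
        intro i
        rw [hFdef]
        simp only [← Set.ncard_eq_toFinset_card']
        exact h2le _
      have hbU : ((Finset.range p).biUnion F).card = ∑ i ∈ Finset.range p, (F i).card := by
        refine Finset.card_biUnion ?_
        intro i hi j hj hij
        rw [hFdef]
        simp only [Set.disjoint_toFinset]
        rcases lt_or_gt_of_ne hij with h | h
        · exact hdisj i j h (Finset.mem_range.mp hj)
        · exact (hdisj j i h (Finset.mem_range.mp hi)).symm
      have hsum : 2 * p ≤ ∑ i ∈ Finset.range p, (F i).card := by
        calc 2 * p = ∑ _i ∈ Finset.range p, 2 := by simp [Nat.mul_comm]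
          _ ≤ ∑ i ∈ Finset.range p, (F i).card := Finset.sum_le_sum fun i _ => hFcard i
      have hle : ((Finset.range p).biUnion F).card ≤ n := by
        simpa using Finset.card_le_univ ((Finset.range p).biUnion F)
      omega
  -- Step B : the support of σ lies in one orbit
  obtain ⟨x0, hx0, -⟩ := id hσcyc
  have hpow_all : ∀ i : ℕ, (σ ^ i) x0 ∈ O x0 := by
    intro i
    induction i with
    | zero => simpa using hmemO x0
    | succ i ih =>
      have h1 : σ ((σ ^ i) x0) ∈ O ((σ ^ i) x0) := hstepA _
      have heq : (σ ^ (i + 1)) x0 = σ ((σ ^ i) x0) := by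
        rw [pow_succ', Perm.mul_apply]
      rw [heq, ← hOeq ih]
      exact h1
  have hsub : (σ.support : Set (Fin n)) ⊆ O x0 := by
    intro y hy
    obtain ⟨i, hi⟩ := hσcyc.exists_pow_eq hx0 (Perm.mem_support.mp (Finset.mem_coe.mp hy))
    rw [← hi]
    exact hpow_all i
  have hOx0 : p ≤ (O x0).ncard := by
    have hle := Set.ncard_le_ncard hsub (Set.toFinite _)
    rwa [Set.ncard_coe_finset, hσcard] at hle
  -- Step C : all orbits coincide, so H is transitive
  have hpretrans : ∀ y z : Fin n, ∃ h ∈ H, h y = z := by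
    intro y z
    have hy : p ≤ (O y).ncard := by rw [hcard_eq y x0]; exact hOx0
    have hz : p ≤ (O z).ncard := by rw [hcard_eq z x0]; exact hOx0
    have hnd : ¬ Disjoint (O y) (O z) := by
      intro hd
      have hcun := Set.ncard_union_eq hd (Set.toFinite _) (Set.toFinite _)
      have hle : (O y ∪ O z).ncard ≤ n := by
        have h1 := Set.ncard_le_ncard (Set.subset_univ (O y ∪ O z)) (Set.toFinite _)
        rwa [Set.ncard_univ, Nat.card_eq_fintype_card, Fintype.card_fin] at h1
      omega
    obtain ⟨w, hwy, hwz⟩ := Set.not_disjoint_iff.mp hnd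
    have heq : O y = O z := (hOeq hwy).symm.trans (hOeq hwz)
    have : z ∈ O y := heq ▸ hmemO z
    exact this
  have hHtop : H = ⊤ := by
    rw [hHdef]
    haveI : MulAction.IsPretransitive (Subgroup.closure S) (Fin n) := by
      constructor
      intro y z
      obtain ⟨h, hh, hhy⟩ := hpretrans y z
      exact ⟨⟨h, hh⟩, hhy⟩
    exact closure_of_isSwap_of_isPretransitive (fun f hf => hf.1)
  exact le_antisymm le_top (by rw [← hHtop]; exact hHG)
end

section
/- Let p be a prime, n a positive integer, and A a rational number with p-adic valuation v_p(A) = 1 such that the polynomial f(X) = X^a (X - A)^{n-a} + A has p-integral coefficients (e.g. A ∈ ℤ_p with v_p(A) = 1, and a < n a positive integer). Then for every positive integer k, the k-th compositional iterate f^{∘k} is an Eisenstein polynomial at p; in particular f^{∘k} is irreducible over ℚ_p. -/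
open Polynomial

/-- `polyIter f k` is the `k`-th compositional iterate `f^{∘k}` of the polynomial `f`. -/
noncomputable def polyIter {R : Type*} [CommSemiring R] (f : Polynomial R) : ℕ → Polynomial R
  | 0 => Polynomial.X
  | k + 1 => (polyIter f k).comp f

lemma polyIter_map {R S : Type*} [CommSemiring R] [CommSemiring S] (φ : R →+* S)
    (f : Polynomial R) (k : ℕ) : (polyIter f k).map φ = polyIter (f.map φ) k := by
  induction k with
  | zero => simp [polyIter]
  | succ k ih => simp [polyIter, Polynomial.map_comp, ih]

lemma polyIter_X_pow {R : Type*} [CommSemiring R] (n k : ℕ) :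
    polyIter (X ^ n : Polynomial R) k = X ^ (n ^ k) := by
  induction k with
  | zero => simp [polyIter]
  | succ k ih =>
    simp only [polyIter, ih, X_pow_comp, ← pow_mul, pow_succ, mul_comm]

lemma polyIter_monic {R : Type*} [CommSemiring R] {f : Polynomial R} (hf : f.Monic)
    (hd : f.natDegree ≠ 0) (k : ℕ) : (polyIter f k).Monic := by
  induction k with
  | zero => exact monic_X
  | succ k ih => exact ih.comp hf hd

lemma polyIter_natDegree {R : Type*} [CommRing R] [IsDomain R] {f : Polynomial R} (k : ℕ) :
    (polyIter f k).natDegree = f.natDegree ^ k := by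
  induction k with
  | zero => simp [polyIter]
  | succ k ih => simp [polyIter, natDegree_comp, ih, pow_succ]

lemma polyIter_eval_fixed {R : Type*} [CommSemiring R] {f : Polynomial R} {x : R}
    (hx : f.eval x = x) (k : ℕ) : (polyIter f k).eval x = x := by
  induction k with
  | zero => simp [polyIter]
  | succ k ih => simp [polyIter, eval_comp, hx, ih]

set_option synthInstance.maxHeartbeats 1000000 in
/-- Lemma 3.3: if `v_p(A) = 1` then every iterate of `f(X) = X^a (X-A)^{n-a} + A`
is Eisenstein at `p`; in particular it is irreducible over `ℚ_p`. -/
theorem iterates_eisenstein_and_irreducible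
    (p : ℕ) [hp : Fact p.Prime] (a n : ℕ) (h0 : 0 < a) (han : a < n)
    (A : ℤ_[p]) (hA : A.valuation = 1) :
    ∀ k : ℕ, 0 < k →
      (polyIter (X ^ a * (X - C A) ^ (n - a) + C A) k).IsEisensteinAt
          (Ideal.span {(p : ℤ_[p])}) ∧
      Irreducible ((polyIter (X ^ a * (X - C A) ^ (n - a) + C A) k).map
          (algebraMap ℤ_[p] ℚ_[p])) := by
  intro k hk
  set f : Polynomial ℤ_[p] := X ^ a * (X - C A) ^ (n - a) + C A with hf
  set I : Ideal ℤ_[p] := Ideal.span {(p : ℤ_[p])} with hI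
  have hA0 : A ≠ 0 := by
    intro h; rw [h] at hA; simp at hA
  have hAmem : A ∈ I := by
    have := (PadicInt.mem_span_pow_iff_le_valuation A hA0 1).2 (by simp [hA])
    simpa [hI] using this
  have hAnotmem : A ∉ I ^ 2 := by
    rw [hI, Ideal.span_singleton_pow]
    intro h
    have := (PadicInt.mem_span_pow_iff_le_valuation A hA0 2).1 h
    rw [hA] at this; norm_num at this
  -- the base polynomial is monic of degree n
  have hg : (X ^ a * (X - C A) ^ (n - a) : Polynomial ℤ_[p]).Monic :=
    (monic_X_pow a).mul ((monic_X_sub_C A).pow (n - a))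
  have hgdeg : (X ^ a * (X - C A) ^ (n - a) : Polynomial ℤ_[p]).natDegree = n := by
    rw [(monic_X_pow a).natDegree_mul ((monic_X_sub_C A).pow (n - a)), natDegree_X_pow,
      natDegree_pow, natDegree_X_sub_C, mul_one]
    omega
  have hfdeg : f.natDegree = n := by rw [hf, natDegree_add_C, hgdeg]
  have hfmonic : f.Monic := by
    rw [hf]
    apply hg.add_of_left
    refine lt_of_le_of_lt degree_C_le ?_
    rw [degree_eq_natDegree hg.ne_zero, hgdeg]
    exact_mod_cast (by omega : 0 < n)
  -- image mod p
  set φ : ℤ_[p] →+* ℤ_[p] ⧸ I := Ideal.Quotient.mk I with hφ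
  have hφA : φ A = 0 := Ideal.Quotient.eq_zero_iff_mem.2 hAmem
  have hmapf : f.map φ = X ^ n := by
    rw [hf]
    simp only [Polynomial.map_add, Polynomial.map_mul, Polynomial.map_pow,
      Polynomial.map_sub, map_X, map_C, hφA, map_zero, sub_zero, add_zero, ← pow_add]
    congr 1
    omega
  -- the iterate
  have hFmonic : (polyIter f k).Monic :=
    polyIter_monic hfmonic (by rw [hfdeg]; omega) k
  have hFdeg : (polyIter f k).natDegree = n ^ k := by
    rw [polyIter_natDegree, hfdeg]
  have hFmap : (polyIter f k).map φ = X ^ (n ^ k) := by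
    rw [polyIter_map, hmapf, polyIter_X_pow]
  have hmem : ∀ {i : ℕ}, i < (polyIter f k).natDegree → (polyIter f k).coeff i ∈ I := by
    intro i hi
    rw [hFdeg] at hi
    have : φ ((polyIter f k).coeff i) = ((polyIter f k).map φ).coeff i := (coeff_map φ i).symm
    rw [hFmap, coeff_X_pow, if_neg (by omega)] at this
    exact Ideal.Quotient.eq_zero_iff_mem.1 this
  -- constant coefficient is A
  have hevalA : f.eval A = A := by
    rw [hf]
    simp [zero_pow (by omega : n - a ≠ 0)]
  have hcoeff0 : (polyIter f k).coeff 0 = A := by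
    obtain ⟨k', rfl⟩ : ∃ k', k = k' + 1 := ⟨k - 1, by omega⟩
    rw [coeff_zero_eq_eval_zero]
    show ((polyIter f k').comp f).eval 0 = A
    rw [eval_comp]
    have h0f : f.eval 0 = A := by
      rw [hf]; simp [zero_pow h0.ne']
    rw [h0f, polyIter_eval_fixed hevalA]
  have hItop : I ≠ ⊤ := by
    rw [hI, Ne, Ideal.span_singleton_eq_top]
    exact PadicInt.prime_p.not_unit
  have hEis : (polyIter f k).IsEisensteinAt I :=
    { leading := hFmonic.leadingCoeff_notMem hItop
      mem := fun hi => hmem hi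
      notMem := by rw [hcoeff0]; exact hAnotmem }
  have hIprime : I.IsPrime := by
    rw [hI]
    exact (Ideal.span_singleton_prime (NeZero.ne _)).2 PadicInt.prime_p
  have hFpos : 0 < (polyIter f k).natDegree := by
    rw [hFdeg]
    exact pow_pos (by omega) k
  refine ⟨hEis, ?_⟩
  exact (hFmonic.irreducible_iff_irreducible_map_fraction_map).1
    (hEis.irreducible hIprime hFmonic.isPrimitive hFpos)
end

section
/- Let l be a prime integer not dividing n - 1, and let B ∈ ℚ_l satisfy v_l(B) = -1. Then the polynomial g(X) = X(X - B)^{n-1} + B splits completely over an unramified extension of ℚ_l. -/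
set_option maxHeartbeats 1000000
set_option synthInstance.maxHeartbeats 200000
open Polynomial

section Adic
variable {R S ι : Type*} [CommRing R] [CommRing S] [Algebra R S] [Fintype ι]

lemma mem_span_pow_iff_basis (b : Module.Basis ι R S) (r : R) (x : S) (k : ℕ) :
    x ∈ Ideal.span {algebraMap R S r} ^ k ↔ ∀ i, r ^ k ∣ b.repr x i := by
  rw [Ideal.span_singleton_pow, Ideal.mem_span_singleton]
  constructor
  · rintro ⟨y, rfl⟩ i
    rw [← map_pow, ← Algebra.smul_def, map_smul]
    exact ⟨b.repr y i, rfl⟩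
  · intro h
    choose c hc using h
    refine ⟨b.repr.symm (Finsupp.equivFunOnFinite.symm c), ?_⟩
    apply b.repr.injective
    ext i
    rw [← map_pow, ← Algebra.smul_def, map_smul, b.repr.apply_symm_apply]
    simpa using hc i

lemma isAdicComplete_of_basis (b : Module.Basis ι R S) (r : R)
    [h : IsAdicComplete (Ideal.span {r}) R] :
    IsAdicComplete (Ideal.span {algebraMap R S r}) S := by
  have hmem : ∀ (z : R) (k : ℕ),
      z ∈ (Ideal.span {r} ^ k • ⊤ : Ideal R) ↔ r ^ k ∣ z := by
    intro z k
    rw [← Ideal.one_eq_top, smul_eq_mul, mul_one, Ideal.span_singleton_pow,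
      Ideal.mem_span_singleton]
  refine { toIsHausdorff := ?_, toIsPrecomplete := ?_ }
  · constructor
    intro x hx
    apply b.repr.injective
    ext i
    simp only [map_zero, Finsupp.coe_zero, Pi.zero_apply]
    refine IsHausdorff.haus h.toIsHausdorff (b.repr x i) fun k => ?_
    rw [SModEq.zero, hmem]
    have := hx k
    rw [SModEq.zero, ← Ideal.one_eq_top, smul_eq_mul, mul_one,
      mem_span_pow_iff_basis b r] at this
    exact this i
  · constructor
    intro f hf
    have hcoord : ∀ i, ∃ L : R, ∀ k,
        b.repr (f k) i ≡ L [SMOD (Ideal.span {r} ^ k • ⊤ : Ideal R)] := by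
      intro i
      refine IsPrecomplete.prec h.toIsPrecomplete (f := fun k => b.repr (f k) i) ?_
      intro p q hpq
      have := hf hpq
      rw [SModEq.sub_mem, ← Ideal.one_eq_top, smul_eq_mul, mul_one,
        mem_span_pow_iff_basis b r] at this
      rw [SModEq.sub_mem, hmem]
      simpa using this i
    choose L hL using hcoord
    refine ⟨b.repr.symm (Finsupp.equivFunOnFinite.symm L), fun k => ?_⟩
    rw [SModEq.sub_mem, ← Ideal.one_eq_top, smul_eq_mul, mul_one,
      mem_span_pow_iff_basis b r]
    intro i
    have := hL i k
    rw [SModEq.sub_mem, hmem] at this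
    simpa [b.repr.apply_symm_apply] using this

end Adic


theorem aux_splits
    (l : ℕ) [hl : Fact l.Prime] (d m₀ : ℕ) (hd : 1 ≤ d) (hln : ¬ l ∣ d)
    (hcase : (l = 2 ∧ m₀ = d) ∨ (l ≠ 2 ∧ m₀ = 2 * d))
    (K : Type*) [Field K] [Algebra ℚ_[l] K] (μ : K) (hμ : IsPrimitiveRoot μ m₀)
    (B : ℚ_[l]) (hB : B.valuation = -1) :
    ((X * (X - C B) ^ d + C B : Polynomial ℚ_[l]).map (algebraMap ℚ_[l] K)).Splits := by
  have hp := hl.1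
  have hm₀pos : 0 < m₀ := by rcases hcase with ⟨_, rfl⟩ | ⟨_, rfl⟩ <;> omega
  -- basic facts about B and t = B⁻¹
  have hB0 : B ≠ 0 := by
    intro h; rw [h, Padic.valuation_zero] at hB; exact absurd hB (by norm_num)
  set t : ℚ_[l] := B⁻¹ with ht_def
  have hlR : (1:ℝ) < (l:ℝ) := by exact_mod_cast hp.one_lt
  have hlR0 : (l:ℝ) ≠ 0 := by positivity
  have hnormB : ‖B‖ = (l:ℝ) := by
    rw [Padic.norm_eq_zpow_neg_valuation hB0, hB]; simp
  have hnormt : ‖t‖ = (l:ℝ)⁻¹ := by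
    rw [ht_def, norm_inv, hnormB]
  have hlQ0 : (l : ℚ_[l]) ≠ 0 := by
    exact_mod_cast hp.ne_zero
  set t₀ : ℤ_[l] := ⟨t, by rw [hnormt]; exact inv_le_one_of_one_le₀ hlR.le⟩ with ht₀_def
  set w : ℤ_[l] := ⟨t / l, by
    rw [norm_div, hnormt, Padic.norm_p]
    rw [div_self]
    positivity⟩ with hw_def
  have htw : t₀ = (l : ℤ_[l]) * w := by
    apply Subtype.coe_injective
    push_cast
    rw [mul_div_cancel₀ _ hlQ0]
  have hμm : μ ^ m₀ = 1 := hμ.pow_eq_one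
  -- algebra structure
  letI : Algebra ℤ_[l] K := ((algebraMap ℚ_[l] K).comp (algebraMap ℤ_[l] ℚ_[l])).toAlgebra
  haveI : IsScalarTower ℤ_[l] ℚ_[l] K := IsScalarTower.of_algebraMap_eq fun x => rfl
  have halg_inj : Function.Injective (algebraMap ℤ_[l] K) := by
    have : Function.Injective (algebraMap ℚ_[l] K) := (algebraMap ℚ_[l] K).injective
    exact this.comp Subtype.coe_injective
  -- the ring A = Z_l[μ]
  have hμint : IsIntegral ℤ_[l] μ := by
    refine ⟨X ^ m₀ - Polynomial.C 1, ?_, ?_⟩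
    · exact monic_X_pow_sub_C 1 (by omega)
    · simp [hμm]
  set A : Subalgebra ℤ_[l] K := Algebra.adjoin ℤ_[l] {μ} with hA_def
  haveI : Module.Finite ℤ_[l] A := by
    rw [Module.finite_def]
    exact (Submodule.fg_top _).2 hμint.fg_adjoin_singleton
  haveI : NoZeroSMulDivisors ℤ_[l] A := by
    constructor
    intro r x h
    by_cases hr : r = 0
    · exact Or.inl hr
    · right
      apply Subtype.coe_injective
      have : (r • x : K) = 0 := by
        exact_mod_cast congrArg (Subtype.val) h
      rw [Algebra.smul_def] at this
      rcases mul_eq_zero.1 this with h' | h'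
      · exact absurd (halg_inj.eq_iff' (map_zero _) |>.1 h') hr
      · exact h'
  haveI : Module.Free ℤ_[l] A := Module.free_of_finite_type_torsion_free'
  haveI hZcomplete : IsAdicComplete (Ideal.span {(l : ℤ_[l])}) ℤ_[l] := by
    rw [← PadicInt.maximalIdeal_eq_span_p]; infer_instance
  set b := Module.Free.chooseBasis ℤ_[l] A
  haveI hAcomplete : IsAdicComplete (Ideal.span {algebraMap ℤ_[l] A (l : ℤ_[l])}) A :=
    isAdicComplete_of_basis b (l : ℤ_[l])
  set I : Ideal A := Ideal.span {algebraMap ℤ_[l] A (l : ℤ_[l])} with hI_def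
  haveI hHens : HenselianRing A I := inferInstance
  classical
  -- 1 is not in I
  have hInotone : (1 : A) ∉ I := by
    intro h1
    rw [hI_def, Ideal.mem_span_singleton] at h1
    obtain ⟨x, hx⟩ := h1
    have htop : (⊤ : Submodule ℤ_[l] A) ≤ (IsLocalRing.maximalIdeal ℤ_[l]) • ⊤ := by
      intro z _
      have hz : z = (l : ℤ_[l]) • (z * x) := by
        rw [Algebra.smul_def]
        calc z = z * 1 := (mul_one z).symm
        _ = z * ((algebraMap ℤ_[l] A) l * x) := by rw [← hx]
        _ = (algebraMap ℤ_[l] A) l * (z * x) := by ring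
      rw [hz]
      refine Submodule.smul_mem_smul ?_ trivial
      rw [PadicInt.maximalIdeal_eq_span_p]
      exact Ideal.mem_span_singleton_self _
    have hbot := Submodule.eq_bot_of_le_smul_of_le_jacobson_bot (IsLocalRing.maximalIdeal ℤ_[l])
      (⊤ : Submodule ℤ_[l] A) (Module.finite_def.1 ‹Module.Finite ℤ_[l] A›) htop
      (IsLocalRing.jacobson_eq_maximalIdeal ⊥ bot_ne_top).ge
    have h10 : (1 : A) = 0 := by
      have hmem : (1 : A) ∈ (⊤ : Submodule ℤ_[l] A) := trivial
      rw [hbot, Submodule.mem_bot] at hmem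
      exact hmem
    have : ((1 : A) : K) = ((0 : A) : K) := congrArg Subtype.val h10
    simpa using this
  haveI hQnontriv : Nontrivial (A ⧸ I) := by
    refine nontrivial_of_ne 1 0 ?_
    intro h
    rw [← map_one (Ideal.Quotient.mk I), Ideal.Quotient.eq_zero_iff_mem] at h
    exact hInotone h
  -- l = 0 in the quotient
  have hlA : ((l : ℕ) : A) ∈ I := by
    rw [← map_natCast (algebraMap ℤ_[l] A) l]
    exact Ideal.mem_span_singleton_self _
  have hl0 : ((l : ℕ) : A ⧸ I) = 0 := by
    rw [← map_natCast (Ideal.Quotient.mk I) l, Ideal.Quotient.eq_zero_iff_mem]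
    exact hlA
  -- d is a unit in the quotient
  have hcop : Nat.Coprime d l := (Nat.Prime.coprime_iff_not_dvd hp |>.2 hln).symm
  have hdunit : IsUnit ((d : ℕ) : A ⧸ I) := by
    apply IsUnit.of_mul_eq_one ((Nat.gcdA d l : ℤ) : A ⧸ I)
    have hbez : ((1 : ℕ) : ℤ) = (d : ℤ) * Nat.gcdA d l + (l : ℤ) * Nat.gcdB d l := by
      rw [← hcop]; exact Nat.gcd_eq_gcd_ab d l
    have := congrArg (fun z : ℤ => (z : A ⧸ I)) hbez
    push_cast at this
    simp only [hl0, zero_mul, add_zero, mul_zero] at this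
    rw [← this]
  -- the approximate roots
  set aj : ℕ → K := fun j => if l = 2 then -μ ^ j else μ ^ (2 * j + 1) with haj_def
  have hμA : μ ∈ A := Algebra.self_mem_adjoin_singleton ℤ_[l] μ
  have haA : ∀ j, aj j ∈ A := by
    intro j
    rw [haj_def]
    dsimp only
    split
    · exact A.neg_mem (A.pow_mem hμA j)
    · exact A.pow_mem hμA (2 * j + 1)
  have ha_pow : ∀ j, (aj j) ^ d = -1 := by
    intro j
    rcases hcase with ⟨h2, hm2⟩ | ⟨h2, hm2⟩
    · rw [haj_def]
      dsimp only
      rw [if_pos h2]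
      have hodd : Odd d := by
        rw [Nat.odd_iff]
        have := hln
        rw [h2] at this
        omega
      rw [hodd.neg_pow, ← pow_mul, mul_comm j d, pow_mul, ← hm2, hμm, one_pow]
    · rw [haj_def]
      dsimp only
      rw [if_neg h2]
      have hμd : μ ^ d = -1 := by
        have hsq : μ ^ d * μ ^ d = 1 := by
          rw [← pow_add]
          rw [hm2] at hμm
          rw [← hμm]; ring_nf
        rcases mul_self_eq_one_iff.1 hsq with h | h
        · exfalso
          have := hμ.pow_inj (by omega : d < m₀) (by omega : 0 < m₀) ?_
          · omega
          · rw [pow_zero, h]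
        · exact h
      rw [← pow_mul]
      have : (2 * j + 1) * d = m₀ * j + d := by rw [hm2]; ring
      rw [this, pow_add, pow_mul, hμm, one_pow, one_mul, hμd]
  have ha_inj : ∀ j k, j < d → k < d → aj j = aj k → j = k := by
    intro j k hj hk h
    rcases hcase with ⟨h2, hm2⟩ | ⟨h2, hm2⟩
    · rw [haj_def] at h
      dsimp only at h
      rw [if_pos h2, if_pos h2, neg_inj] at h
      exact hμ.pow_inj (by omega) (by omega) h
    · rw [haj_def] at h
      dsimp only at h
      rw [if_neg h2, if_neg h2] at h
      have := hμ.pow_inj (by omega : 2 * j + 1 < m₀) (by omega : 2 * k + 1 < m₀) h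
      omega
  set α : ℕ → A := fun j => ⟨aj j, haA j⟩ with hα_def
  have hα_pow : ∀ j, (α j) ^ d = -1 := by
    intro j
    apply Subtype.coe_injective
    push_cast [hα_def]
    exact ha_pow j
  -- the Hensel polynomial
  set τ : A := algebraMap ℤ_[l] A t₀ with hτ_def
  have hτI : τ ∈ I := by
    rw [hτ_def, htw, map_mul]
    exact Ideal.mul_mem_right _ _ (Ideal.mem_span_singleton_self _)
  set H : Polynomial A := X ^ (d + 1) + X + C τ with hH_def
  have hHmonic : H.Monic := by
    rw [hH_def, add_assoc]
    apply monic_X_pow_add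
    apply lt_of_le_of_lt (degree_add_le _ _)
    have h1 : (X : Polynomial A).degree = 1 := degree_X
    have h2 : (C τ).degree ≤ 0 := degree_C_le
    have : max (X : Polynomial A).degree (C τ).degree ≤ 1 := by
      rw [h1]
      exact max_le le_rfl (h2.trans (by norm_num))
    exact lt_of_le_of_lt this (by exact_mod_cast Nat.lt_succ_of_le hd)
  have hevalH : ∀ a : A, H.eval a = a ^ (d + 1) + a + τ := by
    intro a; rw [hH_def]; simp
  have hderivH : ∀ a : A, H.derivative.eval a = (d + 1 : ℕ) * a ^ d + 1 := by
    intro a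
    rw [hH_def, derivative_add, derivative_add, derivative_C, add_zero, derivative_X,
      derivative_X_pow, Nat.add_sub_cancel]
    rw [eval_add, eval_mul, eval_pow, eval_C, eval_X]
    rw [eval_one]
  -- Hensel lifting
  have hroot : ∀ a : A, (a = 0 ∨ ∃ j, j < d ∧ a = α j) →
      ∃ y : A, H.IsRoot y ∧ y - a ∈ I := by
    intro a ha
    apply HenselianRing.is_henselian H hHmonic a
    · rw [hevalH]
      rcases ha with rfl | ⟨j, hj, rfl⟩
      · simpa using hτI
      · have : α j ^ (d + 1) = -(α j) := by
          rw [pow_succ, hα_pow j]; ring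
        rw [this]
        simpa using hτI
    · rw [hderivH]
      rcases ha with rfl | ⟨j, hj, rfl⟩
      · have : ((d + 1 : ℕ) : A) * (0:A) ^ d + 1 = 1 := by
          rw [zero_pow (by omega : d ≠ 0)]; ring
        rw [this, map_one]
        exact isUnit_one
      · rw [hα_pow j]
        have : ((d + 1 : ℕ) : A) * (-1) + 1 = -(d : A) := by push_cast; ring
        rw [this, map_neg, map_natCast]
        exact hdunit.neg
  -- units in the quotient
  have hαunit : ∀ j, IsUnit (Ideal.Quotient.mk I (α j)) := by
    intro j
    apply IsUnit.of_mul_eq_one (Ideal.Quotient.mk I ((α j) ^ (2 * d - 1)))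
    rw [← map_mul, ← pow_succ']
    have h2d : 2 * d - 1 + 1 = 2 * d := by omega
    rw [h2d, mul_comm 2 d, pow_mul, hα_pow j, neg_one_sq, map_one]
  -- distinct approximations stay distinct mod I
  have hdiff : ∀ j k : ℕ, j < d → k < d → j ≠ k → α j - α k ∉ I := by
    intro j k hj hk hjk hmem
    have hne : α j ≠ α k := by
      intro h
      exact hjk (ha_inj j k hj hk (congrArg Subtype.val h))
    have hgeo := geom_sum₂_mul (α j) (α k) d
    rw [hα_pow j, hα_pow k, sub_self] at hgeo
    have hS : (∑ i ∈ Finset.range d, (α j) ^ i * (α k) ^ (d - 1 - i)) = 0 :=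
      (mul_eq_zero.1 hgeo).resolve_right (sub_ne_zero.2 hne)
    have hq : Ideal.Quotient.mk I (α j) = Ideal.Quotient.mk I (α k) :=
      Ideal.Quotient.eq.2 hmem
    have hS' := congrArg (Ideal.Quotient.mk I) hS
    rw [map_sum, map_zero] at hS'
    have hS'' : ∀ i ∈ Finset.range d,
        Ideal.Quotient.mk I ((α j) ^ i * (α k) ^ (d - 1 - i))
          = Ideal.Quotient.mk I (α k) ^ (d - 1) := by
      intro i hi
      rw [Finset.mem_range] at hi
      rw [map_mul, map_pow, map_pow, hq, ← pow_add]
      congr 1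
      omega
    rw [Finset.sum_congr rfl hS'', Finset.sum_const, Finset.card_range,
      nsmul_eq_mul] at hS'
    have hu : IsUnit ((d : A ⧸ I) * Ideal.Quotient.mk I (α k) ^ (d - 1)) :=
      hdunit.mul ((hαunit k).pow _)
    rw [hS'] at hu
    exact hu.ne_zero rfl
  -- choose the d+1 roots
  set approx : Fin (d + 1) → A := fun j => if (j : ℕ) = 0 then 0 else α ((j : ℕ) - 1)
    with happrox_def
  have happrox_ok : ∀ j : Fin (d + 1), (approx j = 0 ∨ ∃ i, i < d ∧ approx j = α i) := by
    intro j
    rw [happrox_def]; dsimp only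
    by_cases h : (j : ℕ) = 0
    · rw [if_pos h]; exact Or.inl rfl
    · rw [if_neg h]
      refine Or.inr ⟨(j : ℕ) - 1, ?_, rfl⟩
      have := j.isLt; omega
  have hchoice : ∀ j : Fin (d + 1), ∃ y : A, H.IsRoot y ∧ y - approx j ∈ I :=
    fun j => hroot _ (happrox_ok j)
  choose Y hY1 hY2 using hchoice
  have happrox_diff : ∀ j k : Fin (d + 1), approx j - approx k ∈ I → j = k := by
    intro j k hmem
    rw [happrox_def] at hmem; dsimp only at hmem
    by_cases hj : (j : ℕ) = 0 <;> by_cases hk : (k : ℕ) = 0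
    · exact Fin.ext (by omega)
    · rw [if_pos hj, if_neg hk, zero_sub] at hmem
      exact absurd (Ideal.Quotient.eq_zero_iff_mem.2 ((Ideal.neg_mem_iff I).1 hmem))
        (hαunit _).ne_zero
    · rw [if_neg hj, if_pos hk, sub_zero] at hmem
      exact absurd (Ideal.Quotient.eq_zero_iff_mem.2 hmem) (hαunit _).ne_zero
    · rw [if_neg hj, if_neg hk] at hmem
      by_contra hne
      refine hdiff ((j : ℕ) - 1) ((k : ℕ) - 1) ?_ ?_ ?_ hmem
      · have := j.isLt; omega
      · have := k.isLt; omega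
      · intro h
        exact hne (Fin.ext (by omega))
  have hYinj : Function.Injective Y := by
    intro j k h
    have hm := I.sub_mem (hY2 k) (hY2 j)
    rw [h] at hm
    have heq : Y k - approx k - (Y k - approx j) = approx j - approx k := by ring
    rw [heq] at hm
    exact happrox_diff j k hm
  -- move everything to K
  set B' : K := algebraMap ℚ_[l] K B with hB'_def
  have hB'0 : B' ≠ 0 := fun h => hB0 ((algebraMap ℚ_[l] K).injective (h.trans (map_zero _).symm))
  have hτK : ((τ : A) : K) = B'⁻¹ := by
    rw [hτ_def]
    have h1 : ((algebraMap ℤ_[l] A t₀ : A) : K) = algebraMap ℤ_[l] K t₀ := rfl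
    have h2 : algebraMap ℤ_[l] K t₀ = algebraMap ℚ_[l] K (t₀ : ℚ_[l]) := rfl
    rw [h1, h2]
    show algebraMap ℚ_[l] K t = B'⁻¹
    rw [ht_def, map_inv₀, hB'_def]
  set Yc : Fin (d + 1) → K := fun j => ((Y j : A) : K) with hYc_def
  have hYcroot : ∀ j, Yc j ^ (d + 1) + Yc j + B'⁻¹ = 0 := by
    intro j
    have h0 := hY1 j
    rw [Polynomial.IsRoot, hevalH] at h0
    have hcast : Yc j ^ (d + 1) + Yc j + ((τ : A) : K) = 0 := by
      have hv := congrArg Subtype.val h0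
      rw [hYc_def]; dsimp only
      simpa using hv
    rw [hτK] at hcast
    exact hcast
  have hYc0 : ∀ j, Yc j ≠ 0 := by
    intro j h
    have h1 := hYcroot j
    rw [h] at h1
    simp [zero_pow (by omega : d + 1 ≠ 0)] at h1
    exact hB'0 h1
  have hYcinj : Function.Injective Yc := by
    intro j k h
    exact hYinj (Subtype.coe_injective h)
  set xr : Fin (d + 1) → K := fun j => B' + (Yc j)⁻¹ with hxr_def
  have hxrinj : Function.Injective xr := by
    intro j k h
    rw [hxr_def] at h; dsimp only at h
    exact hYcinj (inv_injective (add_left_cancel h))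
  set Gm : Polynomial K := (X * (X - C B) ^ d + C B : Polynomial ℚ_[l]).map (algebraMap ℚ_[l] K)
    with hGm_def
  have hGm_eq : Gm = X * (X - C B') ^ d + C B' := by
    rw [hGm_def]
    simp [Polynomial.map_add, Polynomial.map_mul, Polynomial.map_pow, Polynomial.map_sub, hB'_def]
  have hGmdeg : Gm.natDegree = d + 1 := by
    rw [hGm_eq, natDegree_add_C,
      natDegree_mul X_ne_zero (pow_ne_zero _ (X_sub_C_ne_zero B')),
      natDegree_X, natDegree_pow, natDegree_X_sub_C]
    omega
  have hGm0 : Gm ≠ 0 := by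
    intro h
    rw [h] at hGmdeg
    simp at hGmdeg
  have hGmroot : ∀ j, Gm.IsRoot (xr j) := by
    intro j
    rw [Polynomial.IsRoot.def, hGm_eq, hxr_def]
    dsimp only
    simp only [eval_add, eval_mul, eval_pow, eval_sub, eval_X, eval_C]
    rw [add_sub_cancel_left]
    have hy := hYcroot j
    have hy0 := hYc0 j
    have key : (B' + (Yc j)⁻¹) * ((Yc j)⁻¹) ^ d + B'
        = (Yc j ^ (d + 1) + Yc j + B'⁻¹) * B' * (Yc j ^ (d + 1))⁻¹ := by
      rw [inv_pow]
      field_simp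
      ring
    rw [key, hy, zero_mul, zero_mul]
  -- conclude
  rw [splits_iff_card_roots]
  refine le_antisymm (card_roots' _) ?_
  have hcard : (Finset.image xr Finset.univ).card = d + 1 := by
    rw [Finset.card_image_of_injective _ hxrinj, Finset.card_univ, Fintype.card_fin]
  have hsub : Finset.image xr Finset.univ ⊆ Gm.roots.toFinset := by
    intro x hx
    rw [Finset.mem_image] at hx
    obtain ⟨j, _, rfl⟩ := hx
    rw [Multiset.mem_toFinset, mem_roots hGm0]
    exact hGmroot j
  calc Gm.natDegree = d + 1 := hGmdeg
    _ = (Finset.image xr Finset.univ).card := hcard.symm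
    _ ≤ Gm.roots.toFinset.card := Finset.card_le_card hsub
    _ ≤ Multiset.card Gm.roots := Gm.roots.toFinset_card_le


/-- Lemma 3.4: if `l ∤ n - 1` and `v_l(B) = -1`, then `g(X) = X(X-B)^{n-1} + B`
splits completely over an unramified extension of `ℚ_l`.  (The finite unramified
extensions of `ℚ_l` are exactly the subfields of the cyclotomic fields `ℚ_l(ζ_m)`
with `l ∤ m`, so this is formalized as: `g` splits over some `ℚ_l(ζ_m)` with `l ∤ m`.) -/
theorem splits_over_unramified_extension
    (l n : ℕ) [hl : Fact l.Prime] (hn2 : 2 ≤ n) (hln : ¬ l ∣ (n - 1))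
    (B : ℚ_[l]) (hB : B.valuation = -1) :
    ∃ m : ℕ+, ¬ l ∣ (m : ℕ) ∧
      ((X * (X - C B) ^ (n - 1) + C B : Polynomial ℚ_[l]).map
        (algebraMap ℚ_[l] (CyclotomicField m ℚ_[l]))).Splits := by
  obtain ⟨d, rfl⟩ : ∃ d, n = d + 1 := ⟨n - 1, by omega⟩
  simp only [Nat.add_sub_cancel] at hln ⊢
  have hd : 1 ≤ d := by
    rcases Nat.eq_zero_or_pos d with h | h
    · exact absurd (h ▸ dvd_zero l) hln
    · exact h
  have hp := hl.1
  by_cases hl2 : l = 2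
  · refine ⟨⟨d, hd⟩, hln, ?_⟩
    haveI : NeZero d := ⟨by omega⟩
    exact aux_splits l d d hd hln (Or.inl ⟨hl2, rfl⟩) _ _
      (IsCyclotomicExtension.zeta_spec d ℚ_[l] (CyclotomicField d ℚ_[l])) B hB
  · have h2d : 0 < 2 * d := by omega
    refine ⟨⟨2 * d, h2d⟩, ?_, ?_⟩
    · intro h
      rcases (Nat.Prime.dvd_mul hp).1 h with h3 | h3
      · exact hl2 ((Nat.prime_dvd_prime_iff_eq hp Nat.prime_two).1 h3)
      · exact hln h3
    · haveI : NeZero (2 * d) := ⟨by omega⟩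
      exact aux_splits l d (2 * d) hd hln (Or.inr ⟨hl2, rfl⟩) _ _
        (IsCyclotomicExtension.zeta_spec (2 * d) ℚ_[l] (CyclotomicField (2 * d) ℚ_[l])) B hB
end

section
/- Define the sequence c_0 = a/n and c_k = A^{n-1} c_{k-1}^a (c_{k-1} - 1)^{n-a} + 1 for k ≥ 1, where f(X) = X^a(X-A)^{n-a} + A and 0 < a < n. Then c_k = f^{∘k}((a/n)A)/A for every positive integer k. -/
/-- The sequence `c_0 = a/n`, `c_k = A^{n-1} c_{k-1}^a (c_{k-1}-1)^{n-a} + 1`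
satisfies `c_k = f^{∘k}((a/n)A)/A` for all `k ≥ 1`, where `f(X) = X^a(X-A)^{n-a} + A`. -/
theorem c_seq_eq_iterate_at_critical_point
    (a n : ℕ) (h0 : 0 < a) (han : a < n) (hcop : Nat.Coprime a n)
    (A : ℚ) (hA : A ≠ 0)
    (c : ℕ → ℚ) (hc0 : c 0 = (a : ℚ) / n)
    (hcrec : ∀ k : ℕ, c (k + 1) = A ^ (n - 1) * (c k) ^ a * (c k - 1) ^ (n - a) + 1) :
    ∀ k : ℕ, 0 < k →
      c k = (fun x : ℚ => x ^ a * (x - A) ^ (n - a) + A)^[k] ((a : ℚ) * A / n) / A := by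
  have key : ∀ k : ℕ,
      c k = (fun x : ℚ => x ^ a * (x - A) ^ (n - a) + A)^[k] ((a : ℚ) * A / n) / A := by
    intro k
    induction k with
    | zero =>
      simp only [Function.iterate_zero, id_eq, hc0]
      rw [div_right_comm, mul_div_cancel_right₀ _ hA]
    | succ k ih =>
      rw [hcrec, ih, Function.iterate_succ_apply']
      set y := (fun x : ℚ => x ^ a * (x - A) ^ (n - a) + A)^[k] ((a : ℚ) * A / n)
      have h1 : y / A - 1 = (y - A) / A := by field_simp
      have hpow : A ^ a * A ^ (n - a) = A * A ^ (n - 1) := by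
        rw [← pow_add, ← pow_succ']
        congr 1
        omega
      have h2 : A ^ (n - 1) * (y / A) ^ a * ((y - A) / A) ^ (n - a)
          = y ^ a * (y - A) ^ (n - a) / A := by
        rw [div_pow, div_pow, mul_assoc, div_mul_div_comm, hpow]
        field_simp
      rw [h1, h2, add_div, div_self hA]
  intro k _
  exact key k
end

section
/- Let p be an odd prime dividing the numerator A^+ of A ∈ ℚ (written in lowest terms A = A^+/A^- with A^+ > 0), and suppose p does not divide n. With c_0 = a/n and c_k = A^{n-1} c_{k-1}^a (c_{k-1}-1)^{n-a} + 1, every c_k is p-integral and c_k ≡ 1 (mod p) for all k ≥ 1. -/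
/-- Helper: if `‖(q : ℚ_[p])‖ ≤ 1` then `p` does not divide the denominator of `q`. -/
lemma not_dvd_den_of_norm_le_one (p : ℕ) [Fact p.Prime] {q : ℚ}
    (h : ‖(q : ℚ_[p])‖ ≤ 1) : ¬ p ∣ q.den := by
  intro hdvd
  have hden : ‖((q.den : ℤ) : ℚ_[p])‖ < 1 :=
    Padic.norm_intCast_lt_one_iff.2 (Int.natCast_dvd_natCast.2 hdvd)
  have hnum : ‖((q.num : ℤ) : ℚ_[p])‖ < 1 := by
    have hmul : ((q.num : ℤ) : ℚ_[p]) = (q : ℚ_[p]) * ((q.den : ℤ) : ℚ_[p]) := by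
      exact_mod_cast congrArg (fun x : ℚ => (x : ℚ_[p])) (Rat.mul_den_eq_num q).symm
    rw [hmul, Padic.padicNormE.mul]
    calc ‖(q : ℚ_[p])‖ * ‖((q.den : ℤ) : ℚ_[p])‖
        ≤ 1 * ‖((q.den : ℤ) : ℚ_[p])‖ :=
          mul_le_mul_of_nonneg_right h (norm_nonneg _)
      _ < 1 := by rwa [one_mul]
  have hp' : p.Prime := Fact.out
  have : p ∣ Nat.gcd q.num.natAbs q.den := by
    refine Nat.dvd_gcd ?_ hdvd
    have := (Padic.norm_intCast_lt_one_iff (k := q.num)).1 hnum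
    exact Int.natCast_dvd.1 this
  rw [q.reduced.gcd_eq_one] at this
  exact hp'.not_dvd_one this

/-- Helper: if `‖(q : ℚ_[p])‖ < 1` then `p` divides the numerator of `q`. -/
lemma dvd_num_of_norm_lt_one (p : ℕ) [Fact p.Prime] {q : ℚ}
    (h : ‖(q : ℚ_[p])‖ < 1) : (p : ℤ) ∣ q.num := by
  have hmul : ((q.num : ℤ) : ℚ_[p]) = (q : ℚ_[p]) * ((q.den : ℤ) : ℚ_[p]) := by
    exact_mod_cast congrArg (fun x : ℚ => (x : ℚ_[p])) (Rat.mul_den_eq_num q).symm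
  have hnum : ‖((q.num : ℤ) : ℚ_[p])‖ < 1 := by
    rw [hmul, Padic.padicNormE.mul]
    calc ‖(q : ℚ_[p])‖ * ‖((q.den : ℤ) : ℚ_[p])‖
        ≤ ‖(q : ℚ_[p])‖ * 1 :=
          mul_le_mul_of_nonneg_left (Padic.norm_int_le_one _) (norm_nonneg _)
      _ = ‖(q : ℚ_[p])‖ := mul_one _
      _ < 1 := h
  exact (Padic.norm_intCast_lt_one_iff (k := q.num)).1 hnum

/-- If `p` is an odd prime dividing the numerator of `A` but not `n`, then every term of
the sequence `c_0 = a/n`, `c_k = A^(n-1) c_{k-1}^a (c_{k-1}-1)^{n-a} + 1` is `p`-integral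
and `c_k ≡ 1 (mod p)` for `k ≥ 1` (i.e. `p` does not divide the denominator of `c_k`
and `p` divides the numerator of `c_k - 1`). -/
theorem c_seq_p_integral_and_cong_one
    (a n : ℕ) (h0 : 0 < a) (han : a < n) (hcop : Nat.Coprime a n)
    (A : ℚ) (p : ℕ) (hp : p.Prime) (hodd : Odd p)
    (hpA : (p : ℤ) ∣ A.num) (hpn : ¬ p ∣ n)
    (c : ℕ → ℚ) (hc0 : c 0 = (a : ℚ) / n)
    (hcrec : ∀ k : ℕ, c (k + 1) = A ^ (n - 1) * (c k) ^ a * (c k - 1) ^ (n - a) + 1) :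
    ∀ k : ℕ, 0 < k → ¬ p ∣ (c k).den ∧ (p : ℤ) ∣ (c k - 1).num := by
  haveI : Fact p.Prime := ⟨hp⟩
  -- ‖A‖ < 1
  have hAlt : ‖(A : ℚ_[p])‖ < 1 := by
    have hAden : ¬ p ∣ A.den := by
      intro hdvd
      have : p ∣ Nat.gcd A.num.natAbs A.den :=
        Nat.dvd_gcd (Int.natCast_dvd.1 hpA) hdvd
      rw [A.reduced.gcd_eq_one] at this
      exact hp.not_dvd_one this
    have hAden1 : ‖((A.den : ℤ) : ℚ_[p])‖ = 1 := by
      rcases lt_or_eq_of_le (Padic.norm_int_le_one (p := p) (A.den : ℤ)) with h | h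
      · exfalso
        have := Padic.norm_intCast_lt_one_iff.1 h
        exact hAden (Int.natCast_dvd_natCast.1 this)
      · exact h
    have hAnum : ‖((A.num : ℤ) : ℚ_[p])‖ < 1 :=
      Padic.norm_intCast_lt_one_iff.2 hpA
    have hA : (A : ℚ_[p]) = ((A.num : ℤ) : ℚ_[p]) * (((A.den : ℤ) : ℚ_[p]))⁻¹ := by
      conv_lhs => rw [← Rat.num_div_den A]
      push_cast
      rw [div_eq_mul_inv]
    rw [hA, Padic.padicNormE.mul, norm_inv, hAden1, inv_one, mul_one]
    exact hAnum
  -- main induction: norms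
  have key : ∀ k : ℕ, ‖((c k : ℚ) : ℚ_[p])‖ ≤ 1 ∧
      (0 < k → ‖((c k - 1 : ℚ) : ℚ_[p])‖ < 1) := by
    intro k
    induction k with
    | zero =>
      refine ⟨?_, fun h => absurd h (lt_irrefl 0)⟩
      rw [hc0]
      have hnnorm : ‖((n : ℤ) : ℚ_[p])‖ = 1 := by
        rcases lt_or_eq_of_le (Padic.norm_int_le_one (p := p) (n : ℤ)) with h | h
        · exfalso
          have := Padic.norm_intCast_lt_one_iff.1 h
          exact hpn (Int.natCast_dvd_natCast.1 this)
        · exact h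
      have : (((a : ℚ) / n : ℚ) : ℚ_[p]) = ((a : ℤ) : ℚ_[p]) * (((n : ℤ) : ℚ_[p]))⁻¹ := by
        push_cast
        rw [div_eq_mul_inv]
      rw [this, Padic.padicNormE.mul, norm_inv, hnnorm, inv_one, mul_one]
      exact Padic.norm_int_le_one _
    | succ k ih =>
      have hck : ‖((c k : ℚ) : ℚ_[p])‖ ≤ 1 := ih.1
      have hck1 : ‖((c k - 1 : ℚ) : ℚ_[p])‖ ≤ 1 := by
        have : ((c k - 1 : ℚ) : ℚ_[p]) = (c k : ℚ_[p]) + (-1) := by push_cast; ring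
        rw [this]
        refine le_trans (Padic.nonarchimedean _ _) ?_
        simp only [norm_neg, norm_one]
        exact max_le hck le_rfl
      have hdiff : ‖((c (k + 1) - 1 : ℚ) : ℚ_[p])‖ < 1 := by
        have heq : ((c (k + 1) - 1 : ℚ) : ℚ_[p]) =
            (A : ℚ_[p]) ^ (n - 1) * ((c k : ℚ) : ℚ_[p]) ^ a *
              ((c k - 1 : ℚ) : ℚ_[p]) ^ (n - a) := by
          rw [hcrec k]
          push_cast
          ring
        rw [heq]
        have hAn : ‖(A : ℚ_[p]) ^ (n - 1)‖ < 1 := by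
          rw [norm_pow]
          have hn1 : 1 ≤ n - 1 := by omega
          calc ‖(A : ℚ_[p])‖ ^ (n - 1) ≤ ‖(A : ℚ_[p])‖ ^ 1 :=
                pow_le_pow_of_le_one (norm_nonneg _) hAlt.le hn1
            _ = ‖(A : ℚ_[p])‖ := pow_one _
            _ < 1 := hAlt
        have h2 : ‖((c k : ℚ) : ℚ_[p]) ^ a‖ ≤ 1 := by
          rw [norm_pow]; exact pow_le_one₀ (norm_nonneg _) hck
        have h3 : ‖((c k - 1 : ℚ) : ℚ_[p]) ^ (n - a)‖ ≤ 1 := by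
          rw [norm_pow]; exact pow_le_one₀ (norm_nonneg _) hck1
        calc ‖(A : ℚ_[p]) ^ (n - 1) * ((c k : ℚ) : ℚ_[p]) ^ a *
              ((c k - 1 : ℚ) : ℚ_[p]) ^ (n - a)‖
            = ‖(A : ℚ_[p]) ^ (n - 1)‖ * ‖((c k : ℚ) : ℚ_[p]) ^ a‖ *
              ‖((c k - 1 : ℚ) : ℚ_[p]) ^ (n - a)‖ := by
              rw [Padic.padicNormE.mul, Padic.padicNormE.mul]
          _ ≤ ‖(A : ℚ_[p]) ^ (n - 1)‖ * 1 * 1 :=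
              mul_le_mul (mul_le_mul le_rfl h2 (norm_nonneg _) (norm_nonneg _)) h3
                (norm_nonneg _) (by positivity)
          _ = ‖(A : ℚ_[p]) ^ (n - 1)‖ := by ring
          _ < 1 := hAn
      refine ⟨?_, fun _ => hdiff⟩
      have : ((c (k + 1) : ℚ) : ℚ_[p]) = ((c (k + 1) - 1 : ℚ) : ℚ_[p]) + 1 := by
        push_cast; ring
      rw [this]
      refine le_trans (Padic.nonarchimedean _ _) ?_
      simp only [norm_one]
      exact max_le hdiff.le le_rfl
  intro k hk
  obtain ⟨h1, h2⟩ := key k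
  have h2' := h2 hk
  exact ⟨not_dvd_den_of_norm_le_one p h1, dvd_num_of_norm_lt_one p h2'⟩
end

section
/- Suppose 0 < a < n, A ∈ ℚ with v_2(A) ≥ 3/(n-1) + n·v_2(n)/(n-1). Define c_0 = a/n and c_k = A^{n-1} c_{k-1}^a (c_{k-1}-1)^{n-a} + 1 for k ≥ 1. Then for all k ≥ 1, c_k is 2-integral and c_k ≡ 1 (mod 8); in particular c_k is a square in ℤ_2^×. -/
private lemma padicNorm_pow (p : ℕ) [Fact p.Prime] (q : ℚ) (m : ℕ) :
    padicNorm p (q ^ m) = padicNorm p q ^ m := by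
  induction m with
  | zero => simp [padicNorm.one]
  | succ m ih => rw [pow_succ, pow_succ, padicNorm.mul, ih]

/-- If `v_2(A) ≥ 3/(n-1) + n·v_2(n)/(n-1)`, then every term `c_k` (`k ≥ 1`) of the
sequence `c_0 = a/n`, `c_k = A^{n-1} c_{k-1}^a (c_{k-1}-1)^{n-a} + 1` is `2`-integral
and `≡ 1 (mod 8)`; in particular `c_k` is the square of a unit of `ℤ_2`. -/
theorem c_seq_square_in_Z2
    (a n : ℕ) (h0 : 0 < a) (han : a < n)
    (A : ℚ)
    (hv2 : (3 : ℚ) / (n - 1) + (n : ℚ) * (padicValNat 2 n) / (n - 1) ≤ padicValRat 2 A)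
    (c : ℕ → ℚ) (hc0 : c 0 = (a : ℚ) / n)
    (hcrec : ∀ k : ℕ, c (k + 1) = A ^ (n - 1) * (c k) ^ a * (c k - 1) ^ (n - a) + 1) :
    ∀ k : ℕ, 0 < k →
      ¬ 2 ∣ (c k).den ∧ (8 : ℤ) ∣ (c k - 1).num ∧
      ∃ u : ℤ_[2]ˣ, (((u * u : ℤ_[2]ˣ) : ℤ_[2]) : ℚ_[2]) = ((c k : ℚ) : ℚ_[2]) := by
  have hn2 : 2 ≤ n := by omega
  have hn0 : (n : ℚ) ≠ 0 := by positivity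
  have hn1 : (1 : ℚ) ≤ (n : ℚ) - 1 := by
    have : (2 : ℚ) ≤ n := by exact_mod_cast hn2
    linarith
  set w : ℕ := padicValNat 2 n with hw
  set v : ℤ := padicValRat 2 A with hv
  have hA0 : A ≠ 0 := by
    intro h
    have hv0 : v = 0 := by simp [hv, h, padicValRat]
    rw [hv0] at hv2
    have h1 : (0 : ℚ) < 3 / ((n : ℚ) - 1) := by positivity
    have h2 : (0 : ℚ) ≤ (n : ℚ) * w / ((n : ℚ) - 1) := by positivity
    push_cast at hv2
    linarith
  -- key integer inequality
  have hkey : (3 : ℤ) + n * w ≤ (↑n - 1) * v := by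
    have h1 : (0 : ℚ) < (n : ℚ) - 1 := by linarith
    have h2 : (3 : ℚ) + n * w ≤ ((n : ℚ) - 1) * v := by
      rw [← add_div, div_le_iff₀ h1] at hv2
      linarith
    exact_mod_cast h2
  have hv1 : (1 : ℤ) ≤ v := by
    by_contra h
    push_neg at h
    have hv0 : v ≤ 0 := by omega
    have : ((n : ℤ) - 1) * v ≤ 0 := by
      apply mul_nonpos_of_nonneg_of_nonpos _ hv0
      have : (2 : ℤ) ≤ n := by exact_mod_cast hn2
      omega
    have h3 : (0 : ℤ) ≤ n * w := by positivity
    omega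
  -- basic norm facts
  have h12 : (1 : ℚ) < 2 := one_lt_two
  have h2ne : (2 : ℚ) ≠ 0 := two_ne_zero
  have hnA : padicNorm 2 A = (2 : ℚ) ^ (-v) := padicNorm.eq_zpow_of_nonzero hA0
  have hA1 : padicNorm 2 A ≤ 1 := by
    rw [hnA]
    calc (2:ℚ) ^ (-v) ≤ (2:ℚ) ^ (0:ℤ) := zpow_le_zpow_right₀ (le_of_lt h12) (by omega)
      _ = 1 := zpow_zero 2
  have hApow : padicNorm 2 A ^ (n - 1) ≤ (2 : ℚ) ^ (-((3:ℤ) + n * w)) := by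
    rw [hnA, ← zpow_natCast ((2:ℚ) ^ (-v)) (n-1), ← zpow_mul]
    apply zpow_le_zpow_right₀ (le_of_lt h12)
    have hcast : ((n - 1 : ℕ) : ℤ) = (n : ℤ) - 1 := by omega
    rw [hcast]
    nlinarith [hkey]
  have hnn : padicNorm 2 (n : ℚ) = (2 : ℚ) ^ (-(w : ℤ)) := by
    rw [padicNorm.eq_zpow_of_nonzero hn0]
    congr 1
    rw [padicValRat.of_nat]
  have hzwpos : (0:ℚ) < (2:ℚ) ^ (-(w:ℤ)) := by positivity
  have hc0n : padicNorm 2 (c 0) ≤ (2 : ℚ) ^ (w : ℤ) := by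
    rw [hc0, padicNorm.div, hnn]
    calc padicNorm 2 (a:ℚ) / (2:ℚ) ^ (-(w:ℤ)) ≤ 1 / (2:ℚ) ^ (-(w:ℤ)) := by
          gcongr
          exact padicNorm.of_nat a
      _ = (2:ℚ) ^ (w:ℤ) := by rw [one_div, ← zpow_neg, neg_neg]
  have hc0n' : padicNorm 2 (c 0 - 1) ≤ (2 : ℚ) ^ (w : ℤ) := by
    have heq : c 0 - 1 = (((a : ℤ) - n : ℤ) : ℚ) / n := by
      rw [hc0]
      push_cast
      field_simp
    rw [heq, padicNorm.div, hnn]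
    calc padicNorm 2 (((a : ℤ) - n : ℤ) : ℚ) / (2:ℚ) ^ (-(w:ℤ)) ≤ 1 / (2:ℚ) ^ (-(w:ℤ)) := by
          gcongr
          exact padicNorm.of_int _
      _ = (2:ℚ) ^ (w:ℤ) := by rw [one_div, ← zpow_neg, neg_neg]
  -- the key bound, proved by induction
  have main : ∀ k : ℕ, padicNorm 2 (c (k + 1) - 1) ≤ 1 / 8 := by
    intro k
    induction k with
    | zero =>
      have heq : c 1 - 1 = A ^ (n-1) * (c 0) ^ a * (c 0 - 1) ^ (n-a) := by
        rw [hcrec 0]; ring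
      rw [heq, padicNorm.mul, padicNorm.mul, padicNorm_pow, padicNorm_pow, padicNorm_pow]
      have b1 : padicNorm 2 (c 0) ^ a ≤ ((2:ℚ) ^ (w:ℤ)) ^ a :=
        pow_le_pow_left₀ (padicNorm.nonneg _) hc0n a
      have b2 : padicNorm 2 (c 0 - 1) ^ (n-a) ≤ ((2:ℚ) ^ (w:ℤ)) ^ (n-a) :=
        pow_le_pow_left₀ (padicNorm.nonneg _) hc0n' (n-a)
      have hfin : (2:ℚ) ^ (-((3:ℤ) + n * w)) * ((2:ℚ) ^ (w:ℤ)) ^ a * ((2:ℚ) ^ (w:ℤ)) ^ (n-a)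
          = 1 / 8 := by
        rw [← zpow_natCast ((2:ℚ) ^ (w:ℤ)) a, ← zpow_natCast ((2:ℚ) ^ (w:ℤ)) (n-a),
          ← zpow_mul, ← zpow_mul, ← zpow_add₀ h2ne, ← zpow_add₀ h2ne]
        have hexp : -((3:ℤ) + n * w) + (w:ℤ) * a + (w:ℤ) * ((n - a : ℕ) : ℤ) = -3 := by
          have : ((n - a : ℕ) : ℤ) = (n : ℤ) - a := by omega
          rw [this]; ring
        rw [hexp]
        norm_num
      calc padicNorm 2 A ^ (n-1) * padicNorm 2 (c 0) ^ a * padicNorm 2 (c 0 - 1) ^ (n-a)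
          ≤ (2:ℚ) ^ (-((3:ℤ) + n * w)) * ((2:ℚ) ^ (w:ℤ)) ^ a * ((2:ℚ) ^ (w:ℤ)) ^ (n-a) := by
            apply mul_le_mul _ b2 (pow_nonneg (padicNorm.nonneg _) _) (by positivity)
            exact mul_le_mul hApow b1 (pow_nonneg (padicNorm.nonneg _) _) (by positivity)
        _ = 1 / 8 := hfin
    | succ k ih =>
      have hck : padicNorm 2 (c (k+1)) ≤ 1 := by
        have heq : c (k+1) = (c (k+1) - 1) + 1 := by ring
        calc padicNorm 2 (c (k+1)) = padicNorm 2 ((c (k+1) - 1) + 1) := by rw [← heq]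
          _ ≤ max (padicNorm 2 (c (k+1) - 1)) (padicNorm 2 1) := padicNorm.nonarchimedean
          _ ≤ 1 := by rw [padicNorm.one]; exact max_le (by linarith) le_rfl
      have heq : c (k+2) - 1 = A ^ (n-1) * (c (k+1)) ^ a * (c (k+1) - 1) ^ (n-a) := by
        rw [hcrec (k+1)]; ring
      rw [heq, padicNorm.mul, padicNorm.mul, padicNorm_pow, padicNorm_pow, padicNorm_pow]
      have t1 : padicNorm 2 A ^ (n-1) ≤ 1 := pow_le_one₀ (padicNorm.nonneg _) hA1
      have t2 : padicNorm 2 (c (k+1)) ^ a ≤ 1 := pow_le_one₀ (padicNorm.nonneg _) hck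
      have t3 : padicNorm 2 (c (k+1) - 1) ^ (n-a) ≤ 1 / 8 := by
        calc padicNorm 2 (c (k+1) - 1) ^ (n-a) ≤ padicNorm 2 (c (k+1) - 1) ^ 1 :=
              pow_le_pow_of_le_one (padicNorm.nonneg _) (by linarith) (by omega)
          _ = padicNorm 2 (c (k+1) - 1) := pow_one _
          _ ≤ 1 / 8 := ih
      calc padicNorm 2 A ^ (n-1) * padicNorm 2 (c (k+1)) ^ a * padicNorm 2 (c (k+1) - 1) ^ (n-a)
          ≤ 1 * 1 * (1/8) := by
            apply mul_le_mul _ t3 (pow_nonneg (padicNorm.nonneg _) _) (by norm_num)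
            exact mul_le_mul t1 t2 (pow_nonneg (padicNorm.nonneg _) _) (by norm_num)
        _ = 1 / 8 := by norm_num
  have hcle1 : ∀ k : ℕ, padicNorm 2 (c (k+1)) ≤ 1 := by
    intro k
    have heq : c (k+1) = (c (k+1) - 1) + 1 := by ring
    calc padicNorm 2 (c (k+1)) = padicNorm 2 ((c (k+1) - 1) + 1) := by rw [← heq]
      _ ≤ max (padicNorm 2 (c (k+1) - 1)) (padicNorm 2 1) := padicNorm.nonarchimedean
      _ ≤ 1 := by rw [padicNorm.one]; exact max_le (le_trans (main k) (by norm_num)) le_rfl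
  intro k hk
  obtain ⟨j, rfl⟩ : ∃ j, k = j + 1 := ⟨k - 1, by omega⟩
  have h1 : padicNorm 2 (c (j+1) - 1) ≤ 1 / 8 := main j
  have h2 : padicNorm 2 (c (j+1)) ≤ 1 := hcle1 j
  set q : ℚ := c (j + 1) with hq
  have hqmul : q * (q.den : ℚ) = (q.num : ℚ) := Rat.mul_den_eq_num q
  refine ⟨?_, ?_, ?_⟩
  · -- denominator is odd
    intro hdvd
    have hnumodd : ¬ (2 : ℤ) ∣ q.num := by
      intro hnd
      have h2n : 2 ∣ q.num.natAbs := by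
        have := Int.natAbs_dvd_natAbs.mpr hnd
        simpa using this
      have hg : 2 ∣ Nat.gcd q.num.natAbs q.den := Nat.dvd_gcd h2n hdvd
      have : Nat.gcd q.num.natAbs q.den = 1 := q.reduced
      omega
    have hnum1 : padicNorm 2 ((q.num : ℤ) : ℚ) = 1 := (padicNorm.int_eq_one_iff _).mpr hnumodd
    have hprod : padicNorm 2 q * padicNorm 2 ((q.den : ℕ) : ℚ) = 1 := by
      rw [← padicNorm.mul, hqmul, hnum1]
    have hdlt : padicNorm 2 ((q.den : ℕ) : ℚ) < 1 := (padicNorm.nat_lt_one_iff _).mpr hdvd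
    have hdnn : 0 ≤ padicNorm 2 ((q.den : ℕ) : ℚ) := padicNorm.nonneg _
    nlinarith
  · -- 8 divides the numerator of q - 1
    have hde : padicNorm 2 (((q - 1).den : ℕ) : ℚ) ≤ 1 := padicNorm.of_nat _
    have hmul : padicNorm 2 (((q-1).num : ℤ) : ℚ) ≤ 1 / 8 := by
      have hqe : ((q-1).num : ℚ) = (q - 1) * ((q-1).den : ℚ) := (Rat.mul_den_eq_num (q-1)).symm
      rw [hqe, padicNorm.mul]
      calc padicNorm 2 (q-1) * padicNorm 2 (((q-1).den : ℕ) : ℚ)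
          ≤ (1/8) * 1 := mul_le_mul h1 hde (padicNorm.nonneg _) (by norm_num)
        _ = 1/8 := by norm_num
    have h8 : ((2 ^ 3 : ℕ) : ℤ) ∣ (q - 1).num := by
      rw [padicNorm.dvd_iff_norm_le]
      calc padicNorm 2 (((q-1).num : ℤ) : ℚ) ≤ 1/8 := hmul
        _ = (2:ℚ) ^ (-(3:ℕ) : ℤ) := by norm_num
    norm_num at h8
    exact h8
  · -- square of a unit
    have hx : ‖((q : ℚ) : ℚ_[2])‖ ≤ 1 := by
      rw [Padic.eq_padicNorm]
      exact_mod_cast h2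
    have hx1 : ‖((q : ℚ) : ℚ_[2]) - 1‖ ≤ 1/8 := by
      have heq : ((q : ℚ) : ℚ_[2]) - 1 = ((q - 1 : ℚ) : ℚ_[2]) := by push_cast; ring
      rw [heq, Padic.eq_padicNorm]
      calc ((padicNorm 2 (q - 1) : ℚ) : ℝ) ≤ ((1/8 : ℚ) : ℝ) := by exact_mod_cast h1
        _ = 1/8 := by norm_num
    set b : ℤ_[2] := ⟨((q : ℚ) : ℚ_[2]), hx⟩ with hb
    have hb1 : ‖(1 - b : ℤ_[2])‖ ≤ 1/8 := by
      show ‖((1 - b : ℤ_[2]) : ℚ_[2])‖ ≤ 1/8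
      push_cast
      rw [show (1:ℚ_[2]) - ((q : ℚ) : ℚ_[2]) = -(((q : ℚ) : ℚ_[2]) - 1) by ring, norm_neg]
      exact hx1
    set F : Polynomial ℤ_[2] := Polynomial.X ^ 2 - Polynomial.C b with hF
    have hev1 : F.eval 1 = 1 - b := by simp [hF]
    have hder : F.derivative.eval 1 = 2 := by simp [hF]; norm_num
    have hnorm2 : ‖(2 : ℤ_[2])‖ = 1/2 := by
      have h := PadicInt.norm_p (p := 2)
      rw [show ((2:ℕ) : ℤ_[2]) = (2 : ℤ_[2]) by norm_cast] at h
      rw [h]; norm_num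
    have hhen : ‖F.eval 1‖ < ‖F.derivative.eval 1‖ ^ 2 := by
      rw [hev1, hder, hnorm2]
      calc ‖(1 - b : ℤ_[2])‖ ≤ 1/8 := hb1
        _ < (1/2)^2 := by norm_num
    obtain ⟨z, hz, -, -, -⟩ := hensels_lemma hhen
    have hzz : z ^ 2 = b := by
      have hz0 : z ^ 2 - b = 0 := by simpa [hF] using hz
      exact sub_eq_zero.mp hz0
    have hbnorm : ‖b‖ = 1 := by
      rcases eq_or_lt_of_le (PadicInt.norm_le_one b) with h | h
      · exact h
      · exfalso
        have hmax : ‖(1:ℤ_[2])‖ ≤ max ‖b‖ ‖(1 - b : ℤ_[2])‖ := by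
          have := PadicInt.nonarchimedean b (1 - b)
          simpa using this
        rw [norm_one] at hmax
        have hm : max ‖b‖ ‖(1 - b : ℤ_[2])‖ < 1 := max_lt h (by linarith)
        linarith
    have hznorm : ‖z‖ = 1 := by
      have hsq : ‖z‖ ^ 2 = 1 := by rw [← norm_pow, hzz, hbnorm]
      nlinarith [norm_nonneg z]
    have hu : IsUnit z := PadicInt.isUnit_iff.mpr hznorm
    refine ⟨hu.unit, ?_⟩
    have hval : ((hu.unit * hu.unit : ℤ_[2]ˣ) : ℤ_[2]) = b := by
      rw [Units.val_mul, IsUnit.unit_spec, ← sq, hzz]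
    rw [hval]
end

section
/- Let a, n, A satisfy the hypotheses of Theorem 3.1 (in particular gcd(a,n)=1, A > 2^{1/(n-1)} (a/n)^{-a/(n-1)} |a/n - 1|^{-(n-a)/(n-1)}, gcd(A^+, n) = 2^{v_2(n)}, gcd(A^-, a(a-n)) = 1, and if n is even then A^- ≢ ±1 mod 8). Set n_2 = n/2^{v_2(n)} and c_k = f^{∘k}((a/n)A)/A where f(X) = X^a(X-A)^{n-a}+A. Then for every k ≥ 1, the denominator of c_k in lowest terms is c_k^- = (A^-)^{n^k - 1} · n_2^{n^k} · (-1)^{(n-a)n^{k-1}}. -/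
open Polynomial

/-- For `q = q⁺/q⁻` in lowest terms with `q⁺ > 0`, `ratDenSigned q = q⁻` is the signed
denominator (the sign of `q` is carried by the denominator). -/
def ratDenSigned (q : ℚ) : ℤ := q.num.sign * q.den

private lemma num_den_of_eq_div {q : ℚ} {x : ℤ} {y : ℕ} (hy : y ≠ 0)
    (hco : Nat.Coprime x.natAbs y) (h : q = (x : ℚ) / (y : ℚ)) : q.num = x ∧ q.den = y := by
  have hq : q = Rat.mk' x y hy hco := by
    rw [h, Rat.mk_eq_divInt, Rat.divInt_eq_div]; norm_cast
  rw [hq]; exact ⟨rfl, rfl⟩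

private lemma cop_pow_mul_pow {x : ℤ} {d m : ℕ} (h1 : Nat.Coprime x.natAbs d)
    (h2 : Nat.Coprime x.natAbs m) (α β : ℕ) : Nat.Coprime x.natAbs (d ^ α * m ^ β) :=
  Nat.Coprime.mul_right (h1.pow_right _) (h2.pow_right _)

private lemma nat_odd_pow_iff {m j : ℕ} (h : j ≠ 0) : Odd (m ^ j) ↔ Odd m := by
  rw [← Nat.not_even_iff_odd, ← Nat.not_even_iff_odd, Nat.even_pow]; tauto

private lemma key_parity (b n k : ℕ) (hk : 1 ≤ k) :
    Odd (b * n ^ k) ↔ (Odd n ∧ Odd (b * n ^ (k - 1))) := by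
  obtain ⟨j, rfl⟩ : ∃ j, k = j + 1 := ⟨k - 1, by omega⟩
  simp only [Nat.add_sub_cancel, Nat.odd_mul, nat_odd_pow_iff (Nat.succ_ne_zero j)]
  rcases Nat.eq_zero_or_pos j with rfl | hj
  · simp; tauto
  · rw [nat_odd_pow_iff (by omega)]; tauto

private lemma pow_mul_pow_neg_iff {x y : ℚ} (hx : x < 0) (hy : y < 0) (s t : ℕ) :
    x ^ s * y ^ t < 0 ↔ Odd (s + t) := by
  rcases Nat.even_or_odd s with hs | hs <;> rcases Nat.even_or_odd t with ht | ht
  · have h := mul_pos (hs.pow_pos hx.ne) (ht.pow_pos hy.ne)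
    simp [h.not_gt, Nat.not_odd_iff_even.mpr (hs.add ht)]
  · have h := mul_neg_of_pos_of_neg (hs.pow_pos hx.ne) (ht.pow_neg hy)
    simp [h, hs.add_odd ht]
  · have h := mul_neg_of_neg_of_pos (hs.pow_neg hx) (ht.pow_pos hy.ne)
    simp [h, hs.add_even ht]
  · have h := mul_pos_of_neg_of_neg (hs.pow_neg hx) (ht.pow_neg hy)
    simp [h.not_gt, Nat.not_odd_iff_even.mpr (hs.add_odd ht)]

private lemma cop_add_den (x : ℤ) (y : ℕ) (h : Nat.Coprime x.natAbs y) :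
    Nat.Coprime (x + (y : ℤ)).natAbs y := by
  have h' : IsCoprime x (y : ℤ) := by
    rw [Int.isCoprime_iff_gcd_eq_one]
    simpa [Int.gcd, Int.natAbs_natCast] using h
  have h2 : IsCoprime (x + (y : ℤ)) (y : ℤ) := by
    simpa using h'.add_mul_left_left 1
  rw [Int.isCoprime_iff_gcd_eq_one] at h2
  simpa [Int.gcd, Int.natAbs_natCast] using h2

private lemma two_lt_base (a n : ℕ) (h0 : 0 < a) (han : a < n) (A : ℚ)
    (hB : (2 : ℝ) ^ ((1 : ℝ) / (n - 1)) * ((a : ℝ) / n) ^ (-(a : ℝ) / (n - 1)) *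
        |(a : ℝ) / n - 1| ^ (-((n : ℝ) - a) / (n - 1)) < (A : ℝ)) :
    2 < |A ^ (n - 1) * ((a : ℚ) / n) ^ a * (((a : ℚ) - n) / n) ^ (n - a)| := by
  have hn0 : (0:ℝ) < n := by exact_mod_cast (by omega : 0 < n)
  set α : ℝ := (a : ℝ) / n with hα
  have hα0 : 0 < α := by positivity
  have hα1 : α < 1 := by
    rw [hα, div_lt_one hn0]; exact_mod_cast han
  have hβ0 : (0:ℝ) < |α - 1| := abs_pos.mpr (by linarith)
  set B : ℝ := (2 : ℝ) ^ ((1 : ℝ) / (n - 1)) * α ^ (-(a : ℝ) / (n - 1)) *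
      |α - 1| ^ (-((n : ℝ) - a) / (n - 1)) with hBdef
  have hB0 : 0 < B := by
    apply mul_pos (mul_pos (Real.rpow_pos_of_pos two_pos _) (Real.rpow_pos_of_pos hα0 _))
      (Real.rpow_pos_of_pos hβ0 _)
  have hA0 : (0:ℝ) < (A:ℝ) := lt_trans hB0 hB
  have hne : ((n:ℝ) - 1) ≠ 0 := by
    have : (2:ℝ) ≤ n := by exact_mod_cast (by omega : 2 ≤ n)
    linarith
  have hcast : ((n - 1 : ℕ) : ℝ) = (n : ℝ) - 1 := by
    push_cast [Nat.cast_sub (by omega : 1 ≤ n)]; ring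
  have hcastna : ((n - a : ℕ) : ℝ) = (n : ℝ) - a := by
    push_cast [Nat.cast_sub han.le]; ring
  have hkey : B ^ (n - 1) * α ^ a * |α - 1| ^ (n - a) = 2 := by
    have hB1 : B ^ (n - 1) = 2 * (α ^ a)⁻¹ * (|α - 1| ^ (n - a))⁻¹ := by
      rw [← Real.rpow_natCast B (n - 1), hBdef]
      rw [Real.mul_rpow (by positivity) (by positivity),
        Real.mul_rpow (by positivity) (by positivity)]
      rw [← Real.rpow_mul (by norm_num : (0:ℝ) ≤ 2),
        ← Real.rpow_mul hα0.le, ← Real.rpow_mul hβ0.le, hcast]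
      rw [div_mul_cancel₀ _ hne, div_mul_cancel₀ _ hne, div_mul_cancel₀ _ hne]
      rw [Real.rpow_one]
      rw [show -(a:ℝ) = -((a:ℕ):ℝ) from rfl, show -((n:ℝ) - a) = -((n - a : ℕ):ℝ) from by
        rw [hcastna]]
      rw [Real.rpow_neg hα0.le, Real.rpow_neg hβ0.le, Real.rpow_natCast, Real.rpow_natCast]
    rw [hB1]; field_simp
  have hpow : B ^ (n - 1) < (A:ℝ) ^ (n - 1) :=
    pow_lt_pow_left₀ hB hB0.le (by omega : n - 1 ≠ 0)
  have h2 : (2:ℝ) < (A:ℝ) ^ (n - 1) * α ^ a * |α - 1| ^ (n - a) := by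
    rw [← hkey]
    have := mul_lt_mul_of_pos_right (mul_lt_mul_of_pos_right hpow
      (by positivity : (0:ℝ) < α ^ a)) (by positivity : (0:ℝ) < |α - 1| ^ (n - a))
    linarith
  have hcastexpr : ((|A ^ (n - 1) * ((a : ℚ) / n) ^ a * (((a : ℚ) - n) / n) ^ (n - a)| : ℚ) : ℝ)
      = (A:ℝ) ^ (n - 1) * α ^ a * |α - 1| ^ (n - a) := by
    have e1 : ((a:ℝ) - n) / n = α - 1 := by rw [hα]; field_simp
    push_cast
    rw [e1, abs_mul, abs_mul, abs_pow, abs_pow, abs_pow, abs_of_pos hA0, abs_of_pos hα0]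
  have : ((2:ℚ) : ℝ) < ((|A ^ (n - 1) * ((a : ℚ) / n) ^ a * (((a : ℚ) - n) / n) ^ (n - a)| : ℚ) : ℝ) := by
    rw [hcastexpr]; exact_mod_cast h2
  exact_mod_cast this

set_option maxHeartbeats 4000000 in
/-- Equation (3.3) in Lemma 3.5: under the hypotheses of Theorem 3.1, writing
`c_k = f^{∘k}((a/n)A)/A` with `f(X) = X^a(X-A)^{n-a} + A` and `n₂ = n/2^{v₂(n)}`,
the signed denominator of `c_k` is `(A⁻)^{n^k - 1} · n₂^{n^k} · (-1)^{(n-a)n^{k-1}}`. -/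
theorem denominator_of_c_k
    (a n : ℕ) (h0 : 0 < a) (han : a < n)
    (ha1 : n ≤ 6 → a = 1) (ha2 : n % 8 = 7 → a = 1)
    (ha3 : 6 < n → n % 8 ≠ 7 → Nat.Prime (n - a) ∧ 2 * a < n)
    (A : ℚ)
    (hA2 : ∃ p₀ : ℕ, p₀.Prime ∧ ¬ p₀ ∣ n ∧ padicValRat p₀ A = 1)
    (hA3 : (2 : ℝ) ^ ((1 : ℝ) / (n - 1)) * ((a : ℝ) / n) ^ (-(a : ℝ) / (n - 1)) *
        |(a : ℝ) / n - 1| ^ (-((n : ℝ) - a) / (n - 1)) < (A : ℝ) ∧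
        (1 : ℝ) < (2 : ℝ) ^ ((1 : ℝ) / (n - 1)) * ((a : ℝ) / n) ^ (-(a : ℝ) / (n - 1)) *
        |(a : ℝ) / n - 1| ^ (-((n : ℝ) - a) / (n - 1)))
    (hA4 : (3 : ℚ) / (n - 1) + (n : ℚ) * (padicValNat 2 n) / (n - 1) ≤ padicValRat 2 A)
    (hA5 : Nat.gcd A.num.natAbs n = 2 ^ padicValNat 2 n)
    (hA6 : Int.gcd (ratDenSigned A) ((a : ℤ) * ((a : ℤ) - n)) = 1)
    (hA699 : ∃ p' : ℕ, p'.Prime ∧ n < p' ∧ padicValRat p' A = -1)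
    (hA7 : Even n → (ratDenSigned A) % 8 ≠ 1 ∧ (ratDenSigned A) % 8 ≠ 7) :
    ∀ k : ℕ, 0 < k →
      ratDenSigned ((fun x : ℚ => x ^ a * (x - A) ^ (n - a) + A)^[k] ((a : ℚ) * A / n) / A)
        = (ratDenSigned A) ^ (n ^ k - 1) * ((n / 2 ^ padicValNat 2 n : ℕ) : ℤ) ^ (n ^ k)
          * (-1) ^ ((n - a) * n ^ (k - 1)) := by
  intro k hk
  have hn2 : 2 ≤ n := by omega
  have hnq : ((n : ℚ)) ≠ 0 := by positivity
  have hA1 : (1 : ℚ) < A := by exact_mod_cast lt_trans hA3.2 hA3.1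
  have hA0 : (0 : ℚ) < A := lt_trans one_pos hA1
  have hAne : A ≠ 0 := hA0.ne'
  set v := padicValNat 2 n with hv
  set d := A.den with hd
  set n₂ := n / 2 ^ v with hn₂def
  have hd0 : d ≠ 0 := A.den_nz
  have hn₂0 : n₂ ≠ 0 := (Nat.ordCompl_pos 2 (by omega : n ≠ 0)).ne'
  have hn₂odd : ¬ 2 ∣ n₂ := Nat.not_dvd_ordCompl Nat.prime_two (by omega)
  have hnfact : 2 ^ v * n₂ = n := Nat.ordProj_mul_ordCompl_eq_self n 2
  have hn₂dvd : n₂ ∣ n := Dvd.intro_left _ hnfact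
  set P := A.num with hPdef
  have hP0 : 0 < P := Rat.num_pos.mpr hA0
  have hsignA : ratDenSigned A = (d : ℤ) := by
    unfold ratDenSigned; rw [Int.sign_eq_one_of_pos hP0, one_mul, hd]
  -- coprimality facts
  have cop_an : Nat.Coprime a n := by
    rcases le_or_gt n 6 with h | h
    · simp [ha1 h, Nat.coprime_one_left]
    · by_cases h8 : n % 8 = 7
      · simp [ha2 h8, Nat.coprime_one_left]
      · obtain ⟨hp, h2a⟩ := ha3 h h8
        have hg1 : Nat.gcd a n ∣ n - a :=
          Nat.dvd_sub (Nat.gcd_dvd_right a n) (Nat.gcd_dvd_left a n)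
        rcases hp.eq_one_or_self_of_dvd _ hg1 with h1 | h1
        · exact h1
        · exfalso
          have h2 : Nat.gcd a n ∣ a := Nat.gcd_dvd_left a n
          rw [h1] at h2
          have := Nat.le_of_dvd h0 h2
          omega
  have cop_na_n : Nat.Coprime (n - a) n := by
    have h1 : Nat.gcd (n - a) n ∣ a := by
      have := Nat.dvd_sub (Nat.gcd_dvd_right (n - a) n) (Nat.gcd_dvd_left (n - a) n)
      rwa [Nat.sub_sub_self han.le] at this
    have h2 : Nat.gcd (n - a) n ∣ Nat.gcd a n := Nat.dvd_gcd h1 (Nat.gcd_dvd_right _ _)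
    exact Nat.dvd_one.mp (cop_an ▸ h2)
  have cop_a_n₂ : Nat.Coprime a n₂ := cop_an.coprime_dvd_right hn₂dvd
  have cop_na_n₂ : Nat.Coprime (n - a) n₂ := cop_na_n.coprime_dvd_right hn₂dvd
  have cop_P_d : Nat.Coprime P.natAbs d := A.reduced
  have cop_P_n₂ : Nat.Coprime P.natAbs n₂ := by
    have hg2 : Nat.gcd P.natAbs n₂ ∣ 2 ^ v := by
      rw [← hA5]
      exact Nat.dvd_gcd (Nat.gcd_dvd_left _ _) ((Nat.gcd_dvd_right _ _).trans hn₂dvd)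
    have hgodd : Nat.Coprime (Nat.gcd P.natAbs n₂) 2 := by
      rw [Nat.coprime_comm, Nat.prime_two.coprime_iff_not_dvd]
      intro h2g
      exact hn₂odd (h2g.trans (Nat.gcd_dvd_right _ _))
    exact (hgodd.pow_right v).eq_one_of_dvd hg2
  have habs6 : ((a : ℤ) * ((a : ℤ) - n)).natAbs = a * (n - a) := by
    have h1 : ((a : ℤ) - n) = -((n - a : ℕ) : ℤ) := by
      push_cast [Nat.cast_sub han.le]; ring
    rw [h1, Int.natAbs_mul, Int.natAbs_neg, Int.natAbs_natCast, Int.natAbs_natCast]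
  have hgcd_d : Nat.Coprime d (a * (n - a)) := by
    have h6 := hA6
    rw [hsignA] at h6
    unfold Int.gcd at h6
    rwa [Int.natAbs_natCast, habs6] at h6
  have cop_a_d : Nat.Coprime a d := (hgcd_d.coprime_dvd_right (dvd_mul_right a (n - a))).symm
  have cop_na_d : Nat.Coprime (n - a) d :=
    (hgcd_d.coprime_dvd_right (dvd_mul_left (n - a) a)).symm
  -- 2-adic valuation facts
  have hn1q : (0 : ℚ) < (n : ℚ) - 1 := by
    have : (2 : ℚ) ≤ n := by exact_mod_cast hn2
    linarith
  have hvalA : 3 + (n : ℤ) * v ≤ ((n : ℤ) - 1) * padicValRat 2 A := by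
    rw [← add_div] at hA4
    have h1 := (div_le_iff₀ hn1q).mp hA4
    have h2 : (3 : ℚ) + (n : ℚ) * v ≤ ((n : ℚ) - 1) * (padicValRat 2 A : ℚ) := by
      nlinarith [h1]
    exact_mod_cast h2
  have he_pos : 0 < padicValRat 2 A := by
    by_contra h
    push_neg at h
    have hnn : (0 : ℤ) ≤ (n : ℤ) - 1 := by
      have : (2 : ℤ) ≤ n := by exact_mod_cast hn2
      linarith
    have h1 : ((n : ℤ) - 1) * padicValRat 2 A ≤ 0 := mul_nonpos_of_nonneg_of_nonpos hnn h
    have h2 : (0 : ℤ) ≤ (n : ℤ) * v := by positivity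
    omega
  have hd_odd : ¬ 2 ∣ d := by
    intro h2d
    have h1 : ¬ 2 ∣ P.natAbs := by
      intro h2p
      have h4 : P.natAbs.gcd d = 1 := cop_P_d
      have := Nat.dvd_gcd h2p h2d
      rw [h4] at this
      omega
    have h2 : padicValNat 2 P.natAbs = 0 := padicValNat.eq_zero_of_not_dvd h1
    have h3 : padicValRat 2 A = 0 - padicValNat 2 d := by
      rw [padicValRat_def]
      congr 1
      · show ((padicValNat 2 P.natAbs : ℤ)) = 0
        rw [h2]; rfl
    omega
  have hvP : (padicValNat 2 P.natAbs : ℤ) = padicValRat 2 A := by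
    rw [padicValRat_def]
    have h5 : padicValNat 2 d = 0 := padicValNat.eq_zero_of_not_dvd hd_odd
    rw [show padicValNat 2 A.den = 0 from h5]
    simp [padicValInt]
    rfl
  have hdvdP : (2 : ℤ) ^ (n * v) ∣ P ^ (n - 1) := by
    set m := padicValNat 2 P.natAbs with hm
    have h1 : (2 : ℕ) ^ m ∣ P.natAbs := pow_padicValNat_dvd
    have h2 : (2 : ℤ) ^ m ∣ P := by
      have h3 : ((2 ^ m : ℕ) : ℤ) ∣ ((P.natAbs : ℕ) : ℤ) := Int.natCast_dvd_natCast.mpr h1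
      rw [Int.dvd_natAbs] at h3
      exact_mod_cast h3
    have h3 : n * v ≤ m * (n - 1) := by
      have h4 := hvalA
      rw [← hvP] at h4
      have hc : ((n : ℤ) - 1) = ((n - 1 : ℕ) : ℤ) := by
        push_cast [Nat.cast_sub (by omega : 1 ≤ n)]; ring
      rw [hc] at h4
      have h5 : ((n * v : ℕ) : ℤ) ≤ ((m * (n - 1) : ℕ) : ℤ) := by push_cast; linarith
      exact_mod_cast h5
    calc (2 : ℤ) ^ (n * v) ∣ (2 : ℤ) ^ (m * (n - 1)) := pow_dvd_pow 2 h3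
      _ = ((2 : ℤ) ^ m) ^ (n - 1) := by rw [pow_mul]
      _ ∣ P ^ (n - 1) := pow_dvd_pow_of_dvd h2 _
  -- dynamics setup
  set x0 : ℚ := (a : ℚ) * A / n with hx0
  set F : ℚ → ℚ := fun x => x ^ a * (x - A) ^ (n - a) + A with hF
  set c : ℕ → ℚ := fun j => F^[j] x0 / A with hc
  show ratDenSigned (c k) = _
  have hck : ∀ j, A * c j = F^[j] x0 := by
    intro j
    show A * (F^[j] x0 / A) = _
    rw [mul_comm, div_mul_cancel₀ _ hAne]
  have hc0 : c 0 = (a : ℚ) / n := by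
    show F^[0] x0 / A = _
    rw [Function.iterate_zero_apply, hx0, div_div, mul_div_mul_right _ _ hAne]
  have hrec : ∀ j, c (j + 1) - 1 = A ^ (n - 1) * (c j) ^ a * (c j - 1) ^ (n - a) := by
    intro j
    have h1 : c (j + 1) = F (A * c j) / A := by
      show F^[j+1] x0 / A = _
      rw [Function.iterate_succ_apply', hck j]
    have key : ∀ y : ℚ, ((A * y) ^ a * (A * y - A) ^ (n - a) + A) / A - 1
        = A ^ (n - 1) * y ^ a * (y - 1) ^ (n - a) := by
      intro y
      have h3 : A * y - A = A * (y - 1) := by ring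
      have h4 : (A * y) ^ a * (A * (y - 1)) ^ (n - a)
          = A * (A ^ (n - 1) * y ^ a * (y - 1) ^ (n - a)) := by
        rw [mul_pow, mul_pow]
        have h5 : A ^ a * A ^ (n - a) = A * A ^ (n - 1) := by
          rw [← pow_add, show a + (n - a) = n from by omega]
          conv_lhs => rw [show n = (n - 1) + 1 from by omega]
          rw [pow_succ]; ring
        calc A ^ a * y ^ a * (A ^ (n - a) * (y - 1) ^ (n - a))
            = (A ^ a * A ^ (n - a)) * (y ^ a * (y - 1) ^ (n - a)) := by ring
          _ = (A * A ^ (n - 1)) * (y ^ a * (y - 1) ^ (n - a)) := by rw [h5]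
          _ = A * (A ^ (n - 1) * y ^ a * (y - 1) ^ (n - a)) := by ring
      rw [h3, h4, add_div, mul_div_cancel_left₀ _ hAne, div_self hAne, add_sub_cancel_right]
    rw [h1, hF]
    exact key (c j)
  -- base case
  have hc1 : c 1 - 1 = A ^ (n - 1) * ((a : ℚ) / n) ^ a * (((a : ℚ) - n) / n) ^ (n - a) := by
    have h := hrec 0
    rw [hc0] at h
    rw [h]
    congr 1
    rw [div_sub_one hnq]
  obtain ⟨P₁, hP₁⟩ := hdvdP
  have hAPd : A = (P : ℚ) / (d : ℚ) := (Rat.num_div_den A).symm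
  have hYY : d ^ (n - 1) * n ^ n = 2 ^ (n * v) * (d ^ (n - 1) * n₂ ^ n) := by
    have hnn : n ^ n = (2 ^ v * n₂) ^ n := by rw [hnfact]
    rw [hnn, mul_pow, ← pow_mul, Nat.mul_comm v n]
    ring
  have hfrac0 : c 1 - 1 = ((P ^ (n - 1) * (a : ℤ) ^ a * ((a : ℤ) - n) ^ (n - a) : ℤ) : ℚ)
      / ((d ^ (n - 1) * n ^ n : ℕ) : ℚ) := by
    rw [hc1, hAPd, div_pow, div_pow, div_pow, div_mul_div_comm, div_mul_div_comm]
    have e2 : ((d : ℚ)) ^ (n - 1) * ((n : ℚ)) ^ a * ((n : ℚ)) ^ (n - a)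
        = ((d ^ (n - 1) * n ^ n : ℕ) : ℚ) := by
      push_cast
      rw [mul_assoc, ← pow_add, show a + (n - a) = n from by omega]
    rw [e2]
    push_cast
    ring
  have hfrac1 : c 1 - 1 = ((P₁ * (a : ℤ) ^ a * ((a : ℤ) - n) ^ (n - a) : ℤ) : ℚ)
      / ((d ^ (n - 1) * n₂ ^ n : ℕ) : ℚ) := by
    rw [hfrac0, hP₁, hYY]
    push_cast
    rw [show ((2:ℚ) ^ (n*v) * (P₁:ℚ)) * (a:ℚ)^a * ((a:ℚ) - n)^(n-a)
      = (2:ℚ)^(n*v) * ((P₁:ℚ) * (a:ℚ)^a * ((a:ℚ)-n)^(n-a)) from by ring]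
    rw [mul_div_mul_left _ _ (by positivity : ((2:ℚ))^(n*v) ≠ 0)]
  have hanZ : ((a : ℤ) - n).natAbs = n - a := by
    rw [show ((a : ℤ) - n) = -((n - a : ℕ) : ℤ) from by push_cast [Nat.cast_sub han.le]; ring,
      Int.natAbs_neg, Int.natAbs_natCast]
  have copX : Nat.Coprime (P ^ (n - 1) * (a : ℤ) ^ a * ((a : ℤ) - n) ^ (n - a)).natAbs (d * n₂) := by
    rw [Int.natAbs_mul, Int.natAbs_mul, Int.natAbs_pow, Int.natAbs_pow, Int.natAbs_pow,
      Int.natAbs_natCast, hanZ]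
    refine Nat.Coprime.mul (Nat.Coprime.mul ?_ ?_) ?_
    · exact Nat.Coprime.pow_left _ (cop_P_d.mul_right cop_P_n₂)
    · exact Nat.Coprime.pow_left _ (cop_a_d.mul_right cop_a_n₂)
    · exact Nat.Coprime.pow_left _ (cop_na_d.mul_right cop_na_n₂)
  have copX₁ : Nat.Coprime (P₁ * (a : ℤ) ^ a * ((a : ℤ) - n) ^ (n - a)).natAbs (d * n₂) := by
    apply copX.coprime_dvd_left
    apply Int.natAbs_dvd_natAbs.mpr
    exact ⟨2 ^ (n * v), by rw [hP₁]; ring⟩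
  have hY₁0 : d ^ (n - 1) * n₂ ^ n ≠ 0 := mul_ne_zero (pow_ne_zero _ hd0) (pow_ne_zero _ hn₂0)
  have copX₁' : Nat.Coprime (P₁ * (a : ℤ) ^ a * ((a : ℤ) - n) ^ (n - a)).natAbs
      (d ^ (n - 1) * n₂ ^ n) :=
    cop_pow_mul_pow (copX₁.coprime_dvd_right (dvd_mul_right d n₂))
      (copX₁.coprime_dvd_right (dvd_mul_left n₂ d)) _ _
  have hbase := num_den_of_eq_div hY₁0 copX₁' hfrac1
  have hbase_abs : 2 < |c 1 - 1| := by
    rw [hc1]; exact two_lt_base a n h0 han A hA3.1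
  have hbase_sign : (c 1 - 1 < 0) ↔ Odd ((n - a) * n ^ (1 - 1)) := by
    rw [show (1:ℕ) - 1 = 0 from rfl, pow_zero, mul_one, hc1]
    have haq : (0 : ℚ) < (a : ℚ) := by exact_mod_cast h0
    have hnq' : (0 : ℚ) < (n : ℚ) := by positivity
    have hpos1 : 0 < A ^ (n - 1) * ((a : ℚ) / n) ^ a :=
      mul_pos (pow_pos hA0 _) (pow_pos (div_pos haq hnq') _)
    have hneg : ((a : ℚ) - n) / n < 0 := by
      apply div_neg_of_neg_of_pos _ hnq'
      have : (a : ℚ) < n := by exact_mod_cast han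
      linarith
    rcases Nat.even_or_odd (n - a) with he | ho
    · have h2 := he.pow_pos hneg.ne
      simp [not_lt.mpr (mul_pos hpos1 h2).le, Nat.not_odd_iff_even.mpr he]
    · have h2 := ho.pow_neg hneg
      simp [mul_neg_of_pos_of_neg hpos1 h2, ho]
  -- main induction
  have main : ∀ j, 1 ≤ j → (c j - 1).den = d ^ (n ^ j - 1) * n₂ ^ (n ^ j) ∧
      2 < |c j - 1| ∧ ((c j - 1 < 0) ↔ Odd ((n - a) * n ^ (j - 1))) := by
    intro j hj
    induction j, hj using Nat.le_induction with
    | base =>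
      refine ⟨?_, hbase_abs, hbase_sign⟩
      rw [pow_one]
      exact hbase.2
    | succ j hj ih =>
      obtain ⟨ihden, ihabs, ihsign⟩ := ih
      have hr1 : 1 ≤ |c j - 1| := by linarith
      have hDj0 : (c j - 1).den ≠ 0 := (c j - 1).den_nz
      have hDjQ : (((c j - 1).den : ℕ) : ℚ) ≠ 0 := Nat.cast_ne_zero.mpr hDj0
      have hcrepr : c j = ((((c j - 1).num + ((c j - 1).den : ℤ) : ℤ)) : ℚ)
          / (((c j - 1).den : ℕ) : ℚ) := by
        push_cast
        rw [add_div, Rat.num_div_den, div_self hDjQ]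
        ring
      have hnd := num_den_of_eq_div hDj0 (cop_add_den _ _ (c j - 1).reduced) hcrepr
      have hqden : (c j).den = d ^ (n ^ j - 1) * n₂ ^ (n ^ j) := hnd.2.trans ihden
      have h1n : 1 ≤ n ^ j := Nat.one_le_pow _ _ (by omega)
      have hnnj : n ≤ n ^ j := by
        calc n = n ^ 1 := (pow_one n).symm
          _ ≤ n ^ j := Nat.pow_le_pow_right (by omega) hj
      set Dj := d ^ (n ^ j - 1) * n₂ ^ (n ^ j) with hDj
      set Dj' := d ^ (n ^ (j + 1) - 1) * n₂ ^ (n ^ (j + 1)) with hDj'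
      have hexp : d ^ (n - 1) * Dj ^ a * Dj ^ (n - a) = Dj' := by
        rw [hDj, hDj', mul_pow, mul_pow, ← pow_mul, ← pow_mul, ← pow_mul, ← pow_mul]
        have e2 : n ^ j * a + n ^ j * (n - a) = n ^ (j + 1) := by
          rw [← Nat.mul_add, show a + (n - a) = n from by omega, ← pow_succ]
        have e3 : (n ^ j - 1) * n = n ^ (j + 1) - n := by
          rw [Nat.sub_mul, one_mul, ← pow_succ]
        have hnnj1 : n ≤ n ^ (j + 1) := Nat.le_self_pow (by omega) n
        have e4 : (n - 1) + ((n ^ j - 1) * a + (n ^ j - 1) * (n - a)) = n ^ (j + 1) - 1 := by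
          rw [← Nat.mul_add, show a + (n - a) = n from by omega, e3]
          omega
        calc d ^ (n - 1) * (d ^ ((n ^ j - 1) * a) * n₂ ^ (n ^ j * a))
            * (d ^ ((n ^ j - 1) * (n - a)) * n₂ ^ (n ^ j * (n - a)))
            = d ^ ((n - 1) + ((n ^ j - 1) * a + (n ^ j - 1) * (n - a)))
              * n₂ ^ (n ^ j * a + n ^ j * (n - a)) := by
              rw [pow_add, pow_add, pow_add]; ring
          _ = _ := by rw [e4, e2]
      have key2 : ∀ (xn yn : ℤ) (q r : ℚ), q = (xn : ℚ) / ((Dj : ℕ) : ℚ) →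
          r = (yn : ℚ) / ((Dj : ℕ) : ℚ) →
          A ^ (n - 1) * q ^ a * r ^ (n - a)
            = ((P ^ (n - 1) * xn ^ a * yn ^ (n - a) : ℤ) : ℚ) / ((Dj' : ℕ) : ℚ) := by
        intro xn yn q r hq hr
        rw [hq, hr, hAPd, div_pow, div_pow, div_pow, div_mul_div_comm, div_mul_div_comm]
        rw [show ((d : ℚ)) ^ (n - 1) * ((Dj : ℕ) : ℚ) ^ a * ((Dj : ℕ) : ℚ) ^ (n - a)
            = ((d ^ (n - 1) * Dj ^ a * Dj ^ (n - a) : ℕ) : ℚ) from by push_cast; ring]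
        rw [hexp]
        push_cast
        ring
      have hfrac' : c (j + 1) - 1
          = ((P ^ (n - 1) * (c j).num ^ a * (c j - 1).num ^ (n - a) : ℤ) : ℚ)
            / ((Dj' : ℕ) : ℚ) := by
        rw [hrec j]
        exact key2 (c j).num (c j - 1).num (c j) (c j - 1)
          (by rw [← hqden]; exact (Rat.num_div_den _).symm)
          (by rw [← ihden]; exact (Rat.num_div_den _).symm)
      have hdDj : d ∣ Dj :=
        dvd_mul_of_dvd_left (dvd_pow_self d (by omega : n ^ j - 1 ≠ 0)) _
      have hn₂Dj : n₂ ∣ Dj :=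
        dvd_mul_of_dvd_right (dvd_pow_self n₂ (by omega : n ^ j ≠ 0)) _
      have cq := (c j).reduced
      rw [hqden] at cq
      have cr := (c j - 1).reduced
      rw [ihden] at cr
      have copstep : Nat.Coprime
          (P ^ (n - 1) * (c j).num ^ a * (c j - 1).num ^ (n - a)).natAbs (d * n₂) := by
        rw [Int.natAbs_mul, Int.natAbs_mul, Int.natAbs_pow, Int.natAbs_pow, Int.natAbs_pow]
        refine Nat.Coprime.mul (Nat.Coprime.mul ?_ ?_) ?_
        · exact Nat.Coprime.pow_left _ (cop_P_d.mul_right cop_P_n₂)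
        · exact Nat.Coprime.pow_left _
            ((cq.coprime_dvd_right hdDj).mul_right (cq.coprime_dvd_right hn₂Dj))
        · exact Nat.Coprime.pow_left _
            ((cr.coprime_dvd_right hdDj).mul_right (cr.coprime_dvd_right hn₂Dj))
      have copstep' : Nat.Coprime
          (P ^ (n - 1) * (c j).num ^ a * (c j - 1).num ^ (n - a)).natAbs Dj' := by
        rw [hDj']
        exact cop_pow_mul_pow (copstep.coprime_dvd_right (dvd_mul_right d n₂))
          (copstep.coprime_dvd_right (dvd_mul_left n₂ d)) _ _
      have hDj'0 : Dj' ≠ 0 := by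
        rw [hDj']
        exact mul_ne_zero (pow_ne_zero _ hd0) (pow_ne_zero _ hn₂0)
      have hndstep := num_den_of_eq_div hDj'0 copstep' hfrac'
      have habsq : 1 < |c j| := by
        have h := abs_add_le (c j) (-1 : ℚ)
        rw [← sub_eq_add_neg, abs_neg, abs_one] at h
        linarith
      have hcase : (c j - 1 < 0 ∧ c j < 0) ∨ (2 < c j - 1 ∧ 0 < c j) := by
        rcases lt_or_ge (c j - 1) 0 with h | h
        · left
          refine ⟨h, ?_⟩
          rw [abs_of_neg h] at ihabs
          linarith
        · right
          rw [abs_of_nonneg h] at ihabs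
          exact ⟨ihabs, by linarith⟩
      have habsnext : 2 < |c (j + 1) - 1| := by
        rw [hrec j, abs_mul, abs_mul, abs_pow, abs_pow, abs_pow, abs_of_pos hA0]
        have h1 : 1 ≤ A ^ (n - 1) := one_le_pow₀ hA1.le
        have h2 : 1 ≤ |c j| ^ a := one_le_pow₀ habsq.le
        have h3 : 2 < |c j - 1| ^ (n - a) :=
          lt_of_lt_of_le ihabs (le_self_pow₀ hr1 (by omega : n - a ≠ 0))
        have hnn0 : (0:ℚ) ≤ |c j - 1| ^ (n - a) := pow_nonneg (abs_nonneg _) _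
        calc (2:ℚ) < |c j - 1| ^ (n - a) := h3
          _ = 1 * (1 * |c j - 1| ^ (n - a)) := by ring
          _ ≤ A ^ (n - 1) * (|c j| ^ a * |c j - 1| ^ (n - a)) := by
              refine mul_le_mul h1 ?_ (by positivity) (by positivity)
              exact mul_le_mul_of_nonneg_right h2 hnn0
          _ = A ^ (n - 1) * |c j| ^ a * |c j - 1| ^ (n - a) := by ring
      have hApow : 0 < A ^ (n - 1) := pow_pos hA0 _
      have hfacA : ∀ y : ℚ, (A ^ (n - 1) * y < 0 ↔ y < 0) := by
        intro y
        constructor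
        · intro h
          by_contra hy
          push_neg at hy
          exact absurd h (mul_nonneg hApow.le hy).not_gt
        · exact fun h => mul_neg_of_pos_of_neg hApow h
      have hsignnext : (c (j + 1) - 1 < 0) ↔ Odd ((n - a) * n ^ ((j + 1) - 1)) := by
        rw [Nat.add_sub_cancel, key_parity (n - a) n j hj, hrec j, mul_assoc, hfacA]
        rcases hcase with ⟨hrr, hq⟩ | ⟨hrr, hq⟩
        · rw [pow_mul_pow_neg_iff hq hrr a (n - a), show a + (n - a) = n from by omega]
          have h6 := ihsign.mp hrr
          exact ⟨fun h => ⟨h, h6⟩, fun h => h.1⟩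
        · have hp : 0 < (c j) ^ a * (c j - 1) ^ (n - a) :=
            mul_pos (pow_pos hq _) (pow_pos (by linarith) _)
          constructor
          · intro h
            exact absurd h hp.not_gt
          · rintro ⟨-, h6⟩
            have := ihsign.mpr h6
            linarith
      exact ⟨hndstep.2, habsnext, hsignnext⟩
  -- conclusion
  obtain ⟨hden, habsk, hsignk⟩ := main k hk
  have hrd0 : (c k - 1).den ≠ 0 := (c k - 1).den_nz
  have hDneQ : (((c k - 1).den : ℕ) : ℚ) ≠ 0 := Nat.cast_ne_zero.mpr hrd0
  have hcrepr : c k = ((((c k - 1).num + ((c k - 1).den : ℤ) : ℤ)) : ℚ) / (((c k - 1).den : ℕ) : ℚ) := by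
    push_cast
    rw [add_div, Rat.num_div_den, div_self hDneQ]
    ring
  have hnd := num_den_of_eq_div hrd0 (cop_add_den _ _ (c k - 1).reduced) hcrepr
  have hckden : (c k).den = d ^ (n ^ k - 1) * n₂ ^ (n ^ k) := hnd.2.trans hden
  have hcase : (c k < 0 ∧ c k - 1 < 0) ∨ (0 < c k ∧ ¬(c k - 1 < 0)) := by
    rcases lt_or_ge (c k - 1) 0 with h | h
    · left
      refine ⟨?_, h⟩
      rw [abs_of_neg h] at habsk
      linarith
    · right
      rw [abs_of_nonneg h] at habsk
      exact ⟨by linarith, not_lt.mpr h⟩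
  rw [hsignA]
  unfold ratDenSigned
  rw [hckden]
  rcases hcase with ⟨hneg, hr⟩ | ⟨hpos, hr⟩
  · have hodd : Odd ((n - a) * n ^ (k - 1)) := hsignk.mp hr
    rw [Int.sign_eq_neg_one_of_neg (Rat.num_neg.mpr hneg), hodd.neg_one_pow]
    push_cast
    ring
  · have heven : ¬ Odd ((n - a) * n ^ (k - 1)) := fun h => hr (hsignk.mpr h)
    rw [Int.sign_eq_one_of_pos (Rat.num_pos.mpr hpos),
      (Nat.not_odd_iff_even.mp heven).neg_one_pow]
    push_cast
    ring
end

section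
/- Let a, n, A satisfy the hypotheses of Theorem 3.1 and let f(X) = X^a(X-A)^{n-a} + A. Let p be a prime not dividing n·A^-·A^+ such that v_p(f^{∘k}((a/n)A)) is positive and odd. Then modulo p, f^{∘k}(X) factors as g(X)·(X - (a/n)A)^2 where g is separable and coprime to (X - (a/n)A)^2; i.e., (a/n)A mod p is the unique multiple root of f^{∘k} mod p and it has multiplicity exactly 2. -/
open Polynomial

namespace Lem36

variable {R : Type*} [CommRing R]

lemma eval_polyIter (f : R[X]) (j : ℕ) (x : R) :
    eval x (polyIter f j) = (fun y => eval y f)^[j] x := by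
  induction j generalizing x with
  | zero => simp [polyIter]
  | succ j ih => rw [polyIter, eval_comp, ih, Function.iterate_succ_apply]

lemma map_polyIter {S : Type*} [CommRing S] (σ : R →+* S) (f : R[X]) (j : ℕ) :
    (polyIter f j).map σ = polyIter (f.map σ) j := by
  induction j with
  | zero => simp [polyIter]
  | succ j ih => rw [polyIter, polyIter, map_comp, ih]

lemma eval_derivative_polyIter (f : R[X]) (j : ℕ) (x : R) :
    eval x (derivative (polyIter f j)) =
      ∏ i ∈ Finset.range j, eval ((fun y => eval y f)^[i] x) (derivative f) := by
  induction j generalizing x with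
  | zero => simp [polyIter]
  | succ j ih =>
      rw [polyIter, derivative_comp, eval_mul, eval_comp, ih, Finset.prod_range_succ']
      simp [Function.iterate_succ_apply, mul_comm]

lemma deriv_helper {E : Type*} [Field E] (a' m' n : ℕ) (hn : (n : E) ≠ 0)
    (hsum : a' + 1 + (m' + 1) = n) (α : E) :
    derivative (X ^ (a' + 1) * (X - C α) ^ (m' + 1) + C α)
      = C (n : E) * (X ^ a' * ((X - C α) ^ m' * (X - C (((a' + 1 : ℕ) : E) * α / n)))) := by
  have h1 : C ((n : E)) = C (((a' + 1 : ℕ)) : E) + C (((m' + 1 : ℕ)) : E) := by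
    rw [← C_add, ← Nat.cast_add, hsum]
  have key : (n : E) * (((a' + 1 : ℕ) : E) * α / n) = ((a' + 1 : ℕ) : E) * α := by
    field_simp
  have h2 : C ((n : E)) * C (((a' + 1 : ℕ) : E) * α / n) = C (((a' + 1 : ℕ)) : E) * C α := by
    rw [← C_mul, key, C_mul]
  rw [derivative_add, derivative_C, add_zero, derivative_mul, derivative_X_pow,
    derivative_pow, derivative_X_sub_C, Nat.add_sub_cancel, Nat.add_sub_cancel]
  linear_combination (-(X ^ a' * (X - C α) ^ m' * X)) * h1 + (X ^ a' * (X - C α) ^ m') * h2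

lemma main_alg {E : Type*} [Field E] (a n : ℕ) (h0 : 0 < a) (han : a < n)
    (α : E) (hα : α ≠ 0) (hn : (n : E) ≠ 0) (k : ℕ) (hk : 0 < k)
    (H0 : (fun x : E => x ^ a * (x - α) ^ (n - a) + α)^[k] ((a : E) * α / (n : E)) = 0) :
    ∃ g : E[X],
      polyIter (X ^ a * (X - C α) ^ (n - a) + C α) k
        = g * (X - C ((a : E) * α / (n : E))) ^ 2 ∧
      eval ((a : E) * α / (n : E)) g ≠ 0 ∧
      ∀ r : E,
        eval r (polyIter (X ^ a * (X - C α) ^ (n - a) + C α) k) = 0 →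
        eval r (derivative (polyIter (X ^ a * (X - C α) ^ (n - a) + C α) k)) = 0 →
        r = (a : E) * α / (n : E) := by
  set φ : E → E := fun x => x ^ a * (x - α) ^ (n - a) + α with hφdef
  set c : E := (a : E) * α / (n : E) with hcdef
  set f : E[X] := X ^ a * (X - C α) ^ (n - a) + C α with hfdef
  have hef : ∀ x, eval x f = φ x := by intro x; simp [hfdef, hφdef]
  have hφα : φ α = α := by
    simp [hφdef, sub_self, zero_pow (show n - a ≠ 0 by omega)]
  have hφ0 : φ 0 = α := by
    simp [hφdef, zero_pow (show a ≠ 0 by omega)]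
  have hiterα : ∀ j, φ^[j] α = α := by
    intro j; induction j with
    | zero => rfl
    | succ j ih => rw [Function.iterate_succ_apply', ih, hφα]
  have horb : ∀ j ≤ k, φ^[j] c ≠ α := by
    intro j hj h
    have hke : φ^[k] c = α := by
      have hkj : k = (k - j) + j := by omega
      rw [hkj, Function.iterate_add_apply, h, hiterα]
    rw [H0] at hke
    exact hα hke.symm
  have hne0 : ∀ j < k, φ^[j] c ≠ 0 := by
    intro j hj h
    apply horb (j + 1) (by omega)
    rw [Function.iterate_succ_apply', h, hφ0]
  have hneα : ∀ j < k, φ^[j] c ≠ α := fun j hj => horb j (le_of_lt hj)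
  have hnec : ∀ j, 0 < j → j < k → φ^[j] c ≠ c := by
    intro j h1 h2 h
    apply hne0 (k - j) (by omega)
    have he : φ^[k] c = φ^[k - j] (φ^[j] c) := by
      rw [← Function.iterate_add_apply]
      congr 1; omega
    rw [h] at he
    rw [← he, H0]
  have hc0 : c ≠ 0 := hne0 0 hk
  have hcα : c ≠ α := hneα 0 hk
  have hder : derivative f = C (n : E) * (X ^ (a - 1) * ((X - C α) ^ (n - a - 1) * (X - C c))) := by
    have ea : a = a - 1 + 1 := by omega
    have em : n - a = n - a - 1 + 1 := by omega
    have h := deriv_helper (a - 1) (n - a - 1) n hn (by omega) α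
    rw [← ea, ← em] at h
    rw [hfdef, h, hcdef]
  have hevald : ∀ y : E, eval y (derivative f)
      = (n : E) * (y ^ (a - 1) * ((y - α) ^ (n - a - 1) * (y - c))) := by
    intro y; rw [hder]; simp
  have hdc : eval c (derivative f) = 0 := by rw [hevald]; simp
  have hdne : ∀ y : E, y ≠ 0 → y ≠ α → y ≠ c → eval y (derivative f) ≠ 0 := by
    intro y hy1 hy2 hy3; rw [hevald]
    exact mul_ne_zero hn (mul_ne_zero (pow_ne_zero _ hy1)
      (mul_ne_zero (pow_ne_zero _ (sub_ne_zero.2 hy2)) (sub_ne_zero.2 hy3)))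
  set F : E[X] := polyIter f k with hFdef
  have hfunφ : (fun y : E => eval y f) = φ := funext hef
  have hFeval : ∀ x, eval x F = φ^[k] x := by
    intro x; rw [hFdef, eval_polyIter, hfunφ]
  have hFc : eval c F = 0 := by rw [hFeval, H0]
  have hFd : ∀ x, eval x (derivative F)
      = ∏ i ∈ Finset.range k, eval (φ^[i] x) (derivative f) := by
    intro x; rw [hFdef, eval_derivative_polyIter, hfunφ]
  have hF'c : eval c (derivative F) = 0 := by
    rw [hFd]
    apply Finset.prod_eq_zero (Finset.mem_range.2 hk)
    simpa using hdc
  obtain ⟨k', hk'⟩ : ∃ k', k = k' + 1 := ⟨k - 1, by omega⟩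
  have hFsplit : F = (polyIter f k').comp f := by rw [hFdef, hk']; rfl
  have hFder : derivative F = derivative f * (derivative (polyIter f k')).comp f := by
    rw [hFsplit, derivative_comp]
  set w : E[X] := (C (n : E) * (X ^ (a - 1) * (X - C α) ^ (n - a - 1)))
      * (derivative (polyIter f k')).comp f with hwdef
  have hFder2 : derivative F = w * (X - C c) := by
    rw [hFder, hder, hwdef]; ring
  have hwc : eval c w ≠ 0 := by
    rw [hwdef]
    simp only [eval_mul, eval_comp, eval_C, eval_pow, eval_X, eval_sub]
    apply mul_ne_zero
    · exact mul_ne_zero hn (mul_ne_zero (pow_ne_zero _ hc0)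
        (pow_ne_zero _ (sub_ne_zero.2 hcα)))
    · rw [hef c, eval_derivative_polyIter, hfunφ]
      apply Finset.prod_ne_zero_iff.2
      intro i hi
      have hi' : i < k' := Finset.mem_range.1 hi
      have hsw : φ^[i] (φ c) = φ^[i + 1] c := (Function.iterate_succ_apply φ i c).symm
      rw [hsw]
      exact hdne _ (hne0 (i + 1) (by omega)) (hneα (i + 1) (by omega))
        (hnec (i + 1) (by omega) (by omega))
  obtain ⟨h1, hh1⟩ := dvd_iff_isRoot.2 hFc
  have hh1c : eval c h1 = 0 := by
    have hd := hF'c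
    rw [hh1, derivative_mul, derivative_X_sub_C] at hd
    simpa using hd
  obtain ⟨g, hg⟩ := dvd_iff_isRoot.2 hh1c
  have hFg : F = g * (X - C c) ^ 2 := by rw [hh1, hg]; ring
  have hgc : eval c g ≠ 0 := by
    intro h
    obtain ⟨t, ht⟩ := dvd_iff_isRoot.2 h
    have hFt : F = (X - C c) ^ 3 * t := by rw [hFg, ht]; ring
    have hdF : derivative F
        = (X - C c) ^ 2 * (C ((3 : ℕ) : E) * t + (X - C c) * derivative t) := by
      rw [hFt, derivative_mul, derivative_pow, derivative_X_sub_C]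
      norm_num
      ring
    have hXc : (X - C c : E[X]) ≠ 0 := X_sub_C_ne_zero c
    have hcancel : w = (X - C c) * (C ((3 : ℕ) : E) * t + (X - C c) * derivative t) := by
      apply mul_right_cancel₀ hXc
      rw [← hFder2, hdF]; ring
    apply hwc
    rw [hcancel]
    simp
  refine ⟨g, hFg, hgc, ?_⟩
  intro r hr hr'
  have hrF : φ^[k] r = 0 := by rw [← hFeval r]; exact hr
  have hr'' : eval r (derivative F) = 0 := hr'
  rw [hFd] at hr''
  obtain ⟨i, hik, hi0⟩ := Finset.prod_eq_zero_iff.1 hr''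
  have hik' : i < k := Finset.mem_range.1 hik
  rw [hevald] at hi0
  have hcase := mul_eq_zero.1 hi0
  rcases hcase with h | h
  · exact absurd h hn
  rcases mul_eq_zero.1 h with h | h
  · have hy0 : φ^[i] r = 0 := (pow_eq_zero_iff'.1 h).1
    exfalso
    have h2 : φ^[i + 1] r = α := by
      rw [Function.iterate_succ_apply', hy0, hφ0]
    have h3 : φ^[k] r = α := by
      have e : k = (k - (i + 1)) + (i + 1) := by omega
      rw [e, Function.iterate_add_apply, h2, hiterα]
    rw [hrF] at h3
    exact hα h3.symm
  rcases mul_eq_zero.1 h with h | h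
  · have hyα : φ^[i] r = α := by
      exact sub_eq_zero.1 (pow_eq_zero_iff'.1 h).1
    exfalso
    have h3 : φ^[k] r = α := by
      have e : k = (k - i) + i := by omega
      rw [e, Function.iterate_add_apply, hyα, hiterα]
    rw [hrF] at h3
    exact hα h3.symm
  · have hyc : φ^[i] r = c := by
      exact sub_eq_zero.1 h
    by_cases hi : i = 0
    · rw [hi] at hyc; simpa using hyc
    · exfalso
      apply hne0 (k - i) (by omega)
      have e : k = (k - i) + i := by omega
      rw [← hyc, ← Function.iterate_add_apply, ← e, hrF]

end Lem36

/-- Claim (1) of Lemma 3.6: under the hypotheses of Theorem 3.1, if `p` is a prime not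
dividing `n·A⁻·A⁺` such that `v_p(f^{∘k}((a/n)A))` is positive and odd, then modulo `p`
the iterate `f^{∘k}` factors as `g(X)·(X - (a/n)A)²` with `g` separable and coprime to
`(X - (a/n)A)²`; i.e. `(a/n)A mod p` is the unique multiple root and has multiplicity 2. -/
theorem iterate_mod_p_has_unique_double_root
    (a n : ℕ) (h0 : 0 < a) (han : a < n)
    (ha1 : n ≤ 6 → a = 1) (ha2 : n % 8 = 7 → a = 1)
    (ha3 : 6 < n → n % 8 ≠ 7 → Nat.Prime (n - a) ∧ 2 * a < n)
    (A : ℚ)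
    (hA2 : ∃ p₀ : ℕ, p₀.Prime ∧ ¬ p₀ ∣ n ∧ padicValRat p₀ A = 1)
    (hA3 : (2 : ℝ) ^ ((1 : ℝ) / (n - 1)) * ((a : ℝ) / n) ^ (-(a : ℝ) / (n - 1)) *
        |(a : ℝ) / n - 1| ^ (-((n : ℝ) - a) / (n - 1)) < (A : ℝ) ∧
        (1 : ℝ) < (2 : ℝ) ^ ((1 : ℝ) / (n - 1)) * ((a : ℝ) / n) ^ (-(a : ℝ) / (n - 1)) *
        |(a : ℝ) / n - 1| ^ (-((n : ℝ) - a) / (n - 1)))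
    (hA4 : (3 : ℚ) / (n - 1) + (n : ℚ) * (padicValNat 2 n) / (n - 1) ≤ padicValRat 2 A)
    (hA5 : Nat.gcd A.num.natAbs n = 2 ^ padicValNat 2 n)
    (hA6 : Int.gcd (ratDenSigned A) ((a : ℤ) * ((a : ℤ) - n)) = 1)
    (hA699 : ∃ p' : ℕ, p'.Prime ∧ n < p' ∧ padicValRat p' A = -1)
    (hA7 : Even n → (ratDenSigned A) % 8 ≠ 1 ∧ (ratDenSigned A) % 8 ≠ 7)
    (p : ℕ) [hp : Fact p.Prime] (k : ℕ) (hk : 0 < k)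
    (hpdvd : ¬ (p : ℤ) ∣ ((n : ℤ) * ratDenSigned A * |A.num|))
    (hpos : 0 < padicValRat p ((fun x : ℚ => x ^ a * (x - A) ^ (n - a) + A)^[k] ((a : ℚ) * A / n)))
    (hodd : Odd (padicValRat p ((fun x : ℚ => x ^ a * (x - A) ^ (n - a) + A)^[k] ((a : ℚ) * A / n)))) :
    ∃ g : Polynomial (ZMod p),
      polyIter (X ^ a * (X - C ((A.num : ZMod p) / (A.den : ZMod p))) ^ (n - a)
          + C ((A.num : ZMod p) / (A.den : ZMod p))) k
        = g * (X - C ((a : ZMod p) * ((A.num : ZMod p) / (A.den : ZMod p)) / (n : ZMod p))) ^ 2 ∧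
      g.Separable ∧
      IsCoprime g ((X - C ((a : ZMod p) * ((A.num : ZMod p) / (A.den : ZMod p)) / (n : ZMod p))) ^ 2) := by
  clear hodd hA2 hA3 hA4 hA5 hA6 hA699 hA7 ha1 ha2 ha3
  have hpn : ¬ (p : ℤ) ∣ (n : ℤ) :=
    fun h => hpdvd (dvd_mul_of_dvd_left (dvd_mul_of_dvd_left h _) _)
  have hpden : ¬ p ∣ A.den := by
    intro h
    apply hpdvd
    have h2 : (p : ℤ) ∣ ratDenSigned A :=
      Dvd.dvd.mul_left (Int.natCast_dvd_natCast.2 h) _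
    exact dvd_mul_of_dvd_left (dvd_mul_of_dvd_right h2 _) _
  have hpnum : ¬ (p : ℤ) ∣ A.num :=
    fun h => hpdvd (dvd_mul_of_dvd_right ((dvd_abs _ _).2 h) _)
  have hnK : ((n : ℕ) : ZMod p) ≠ 0 := by
    rw [Ne, ZMod.natCast_eq_zero_iff]
    exact fun h => hpn (Int.natCast_dvd_natCast.2 h)
  have hdenK : ((A.den : ℕ) : ZMod p) ≠ 0 := by
    rw [Ne, ZMod.natCast_eq_zero_iff]
    exact hpden
  have hnumK : ((A.num : ℤ) : ZMod p) ≠ 0 := by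
    rw [Ne, ZMod.intCast_zmod_eq_zero_iff_dvd]
    exact hpnum
  set α : ZMod p := (A.num : ZMod p) / (A.den : ZMod p) with hαdef
  have hαne : α ≠ 0 := div_ne_zero hnumK hdenK
  set c₀ : ℚ := (a : ℚ) * A / n with hc₀def
  set φQ : ℚ → ℚ := fun x : ℚ => x ^ a * (x - A) ^ (n - a) + A with hφQdef
  have hApnorm : ‖((A : ℚ) : ℚ_[p])‖ ≤ 1 := Padic.norm_rat_le_one hpden
  have hnnorm : ‖((n : ℕ) : ℚ_[p])‖ = 1 := by
    have h1 : ‖(((n : ℕ) : ℤ) : ℚ_[p])‖ ≤ 1 := Padic.norm_int_le_one _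
    have h2 : ¬ ‖(((n : ℕ) : ℤ) : ℚ_[p])‖ < 1 := by
      rw [Padic.norm_intCast_lt_one_iff]; exact hpn
    push_cast at h1 h2 ⊢
    linarith
  have hanorm : ‖((a : ℕ) : ℚ_[p])‖ ≤ 1 := by
    have h := Padic.norm_int_le_one (p := p) ((a : ℕ) : ℤ)
    push_cast at h
    exact h
  have hcpnorm : ‖((c₀ : ℚ) : ℚ_[p])‖ ≤ 1 := by
    have he : ((c₀ : ℚ) : ℚ_[p]) = ((a : ℕ) : ℚ_[p]) * ((A : ℚ) : ℚ_[p]) / ((n : ℕ) : ℚ_[p]) := by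
      rw [hc₀def]; push_cast; ring
    rw [he, norm_div, norm_mul, hnnorm, div_one]
    calc ‖((a : ℕ) : ℚ_[p])‖ * ‖((A : ℚ) : ℚ_[p])‖ ≤ 1 * 1 :=
          mul_le_mul hanorm hApnorm (norm_nonneg _) zero_le_one
      _ = 1 := mul_one 1
  set Az : ℤ_[p] := ⟨(A : ℚ_[p]), hApnorm⟩ with hAzdef
  set cz : ℤ_[p] := ⟨(c₀ : ℚ_[p]), hcpnorm⟩ with hczdef
  set ψ : ℤ_[p] → ℤ_[p] := fun x => x ^ a * (x - Az) ^ (n - a) + Az with hψdef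
  have hcoeA : ((Az : ℤ_[p]) : ℚ_[p]) = ((A : ℚ) : ℚ_[p]) := rfl
  have hcoec : ((cz : ℤ_[p]) : ℚ_[p]) = ((c₀ : ℚ) : ℚ_[p]) := rfl
  have hcoe : ∀ j, ((ψ^[j] cz : ℤ_[p]) : ℚ_[p]) = ((φQ^[j] c₀ : ℚ) : ℚ_[p]) := by
    intro j
    induction j with
    | zero => simpa using hcoec
    | succ j ih =>
        rw [Function.iterate_succ_apply', Function.iterate_succ_apply']
        have hL : ((ψ (ψ^[j] cz) : ℤ_[p]) : ℚ_[p])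
            = ((ψ^[j] cz : ℤ_[p]) : ℚ_[p]) ^ a
              * (((ψ^[j] cz : ℤ_[p]) : ℚ_[p]) - ((A : ℚ) : ℚ_[p])) ^ (n - a)
              + ((A : ℚ) : ℚ_[p]) := by
          rw [hψdef]
          push_cast [hcoeA]
          ring
        have hR : ((φQ (φQ^[j] c₀) : ℚ) : ℚ_[p])
            = ((φQ^[j] c₀ : ℚ) : ℚ_[p]) ^ a
              * (((φQ^[j] c₀ : ℚ) : ℚ_[p]) - ((A : ℚ) : ℚ_[p])) ^ (n - a)
              + ((A : ℚ) : ℚ_[p]) := by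
          rw [hφQdef]
          push_cast
          ring
        rw [hL, hR, ih]
  have hq0 : φQ^[k] c₀ ≠ 0 := by
    intro h
    rw [h, padicValRat.zero] at hpos
    exact lt_irrefl 0 hpos
  have hvlt : ‖((φQ^[k] c₀ : ℚ) : ℚ_[p])‖ < 1 := by
    rw [Padic.eq_padicNorm, padicNorm.eq_zpow_of_nonzero hq0]
    have hp1 : (1 : ℚ) < p := by exact_mod_cast hp.1.one_lt
    have hlt : (p : ℚ) ^ (-padicValRat p (φQ^[k] c₀)) < 1 :=
      zpow_lt_one_of_neg₀ hp1 (neg_lt_zero.2 hpos)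
    exact_mod_cast hlt
  have hker : PadicInt.toZMod (ψ^[k] cz) = 0 := by
    have hmem : ψ^[k] cz ∈ RingHom.ker (PadicInt.toZMod : ℤ_[p] →+* ZMod p) := by
      rw [PadicInt.ker_toZMod, PadicInt.maximalIdeal_eq_span_p, Ideal.mem_span_singleton,
        ← PadicInt.norm_lt_one_iff_dvd, PadicInt.norm_def, hcoe k]
      exact hvlt
    exact hmem
  have hAnum : Az * ((A.den : ℕ) : ℤ_[p]) = ((A.num : ℤ) : ℤ_[p]) := by
    apply PadicInt.ext
    have hd : (A.den : ℚ) ≠ 0 := by exact_mod_cast A.den_ne_zero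
    have hq : (A * (A.den : ℚ) : ℚ) = (A.num : ℚ) := by
      nth_rewrite 1 [← Rat.num_div_den A]
      rw [div_mul_cancel₀ _ hd]
    calc ((Az * ((A.den : ℕ) : ℤ_[p]) : ℤ_[p]) : ℚ_[p])
        = ((A : ℚ) : ℚ_[p]) * (((A.den : ℕ) : ℚ) : ℚ_[p]) := by push_cast [hcoeA]; ring
      _ = ((A * (A.den : ℚ) : ℚ) : ℚ_[p]) := by push_cast; ring
      _ = ((A.num : ℚ) : ℚ_[p]) := by rw [hq]
      _ = ((((A.num : ℤ) : ℤ_[p]) : ℤ_[p]) : ℚ_[p]) := by push_cast; ring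
  have htZA : PadicInt.toZMod Az = α := by
    have h2 := congrArg (PadicInt.toZMod : ℤ_[p] → ZMod p) hAnum
    simp only [map_mul, map_natCast, map_intCast] at h2
    rw [hαdef, eq_div_iff hdenK]
    exact h2
  have hcnum : cz * ((n : ℕ) : ℤ_[p]) = ((a : ℕ) : ℤ_[p]) * Az := by
    apply PadicInt.ext
    have hnQ : (n : ℚ) ≠ 0 := by
      exact_mod_cast (by omega : n ≠ 0)
    have hq : (c₀ * (n : ℚ) : ℚ) = (a : ℚ) * A := by
      rw [hc₀def, div_mul_cancel₀ _ hnQ]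
    calc ((cz * ((n : ℕ) : ℤ_[p]) : ℤ_[p]) : ℚ_[p])
        = ((c₀ * (n : ℚ) : ℚ) : ℚ_[p]) := by push_cast [hcoec]; ring
      _ = (((a : ℚ) * A : ℚ) : ℚ_[p]) := by rw [hq]
      _ = ((((a : ℕ) : ℤ_[p]) * Az : ℤ_[p]) : ℚ_[p]) := by push_cast [hcoeA]; ring
  have htZc : PadicInt.toZMod cz = (a : ZMod p) * α / (n : ZMod p) := by
    have h2 := congrArg (PadicInt.toZMod : ℤ_[p] → ZMod p) hcnum
    simp only [map_mul, map_natCast, htZA] at h2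
    rw [eq_div_iff hnK]
    exact h2
  set φK : ZMod p → ZMod p := fun x => x ^ a * (x - α) ^ (n - a) + α with hφKdef
  have hiterK : ∀ j, PadicInt.toZMod (ψ^[j] cz) = φK^[j] (PadicInt.toZMod cz) := by
    intro j
    induction j with
    | zero => rfl
    | succ j ih =>
        rw [Function.iterate_succ_apply', Function.iterate_succ_apply', ← ih, hψdef, hφKdef]
        simp only [map_add, map_mul, map_pow, map_sub, htZA]
  have H0K : φK^[k] ((a : ZMod p) * α / (n : ZMod p)) = 0 := by
    rw [← htZc, ← hiterK, hker]
  obtain ⟨g, hgF, hgc, huniq⟩ := Lem36.main_alg a n h0 han α hαne hnK k hk H0K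
  -- separability via the algebraic closure
  set L := AlgebraicClosure (ZMod p) with hLdef
  set σ : ZMod p →+* L := algebraMap (ZMod p) L with hσdef
  have hσinj : Function.Injective σ := σ.injective
  have hαL : σ α ≠ 0 := fun h => hαne (hσinj (by rw [h, map_zero]))
  have hnL : ((n : ℕ) : L) ≠ 0 := by
    intro h
    apply hnK
    apply hσinj
    rw [map_natCast, h, map_zero]
  set φL : L → L := fun x => x ^ a * (x - σ α) ^ (n - a) + σ α with hφLdef
  have hcomm : ∀ (j : ℕ) (x : ZMod p), φL^[j] (σ x) = σ (φK^[j] x) := by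
    intro j
    induction j with
    | zero => intro x; rfl
    | succ j ih =>
        intro x
        rw [Function.iterate_succ_apply, Function.iterate_succ_apply]
        have hone : φL (σ x) = σ (φK x) := by
          rw [hφLdef, hφKdef]
          simp only [map_add, map_mul, map_pow, map_sub]
        rw [hone, ih]
  have hcL : σ ((a : ZMod p) * α / (n : ZMod p)) = (a : L) * σ α / (n : L) := by
    rw [map_div₀, map_mul, map_natCast, map_natCast]
  have H0L : φL^[k] ((a : L) * σ α / (n : L)) = 0 := by
    rw [← hcL, hcomm, H0K, map_zero]
  obtain ⟨g', hg'F, hg'c, huniqL⟩ := Lem36.main_alg a n h0 han (σ α) hαL hnL k hk H0L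
  have hmapF : (polyIter (X ^ a * (X - C α) ^ (n - a) + C α) k).map σ
      = polyIter (X ^ a * (X - C (σ α)) ^ (n - a) + C (σ α)) k := by
    rw [Lem36.map_polyIter]
    congr 1
    simp [Polynomial.map_add, Polynomial.map_mul, Polynomial.map_pow]
  have hFL : polyIter (X ^ a * (X - C (σ α)) ^ (n - a) + C (σ α)) k
      = g.map σ * (X - C ((a : L) * σ α / (n : L))) ^ 2 := by
    rw [← hmapF, hgF, Polynomial.map_mul, Polynomial.map_pow, Polynomial.map_sub,
      Polynomial.map_X, Polynomial.map_C, hcL]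
  have hgg' : g' = g.map σ := by
    apply mul_right_cancel₀ (pow_ne_zero 2 (X_sub_C_ne_zero ((a : L) * σ α / (n : L))))
    rw [← hg'F, hFL]
  have hgLc : eval ((a : L) * σ α / (n : L)) (g.map σ) ≠ 0 := by
    rw [← hgg']; exact hg'c
  have hsq : Squarefree (g.map σ) := by
    intro x hx
    by_contra hxu
    have hgL0 : g.map σ ≠ 0 := by
      intro h; rw [h] at hgLc; simp at hgLc
    have hx0 : x ≠ 0 := by
      rintro rfl
      rw [zero_mul] at hx
      exact hgL0 (zero_dvd_iff.1 hx)
    have hdeg : x.degree ≠ 0 := fun h => hxu (isUnit_iff_degree_eq_zero.2 h)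
    obtain ⟨r, hr⟩ := IsAlgClosed.exists_root x hdeg
    have hrd : (X - C r) ∣ x := dvd_iff_isRoot.2 hr
    have hxx : (X - C r) ^ 2 ∣ x * x := by rw [sq]; exact mul_dvd_mul hrd hrd
    have hsqd : (X - C r) ^ 2 ∣ g.map σ := hxx.trans hx
    obtain ⟨t, ht⟩ := hsqd
    have hFr : polyIter (X ^ a * (X - C (σ α)) ^ (n - a) + C (σ α)) k
        = (X - C r) ^ 2 * (t * (X - C ((a : L) * σ α / (n : L))) ^ 2) := by
      rw [hFL, ht]; ring
    have h1 : eval r (polyIter (X ^ a * (X - C (σ α)) ^ (n - a) + C (σ α)) k) = 0 := by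
      rw [hFr]; simp
    have h2 : eval r (derivative (polyIter (X ^ a * (X - C (σ α)) ^ (n - a) + C (σ α)) k)) = 0 := by
      rw [hFr, derivative_mul, derivative_pow, derivative_X_sub_C]
      simp
    have hrc := huniqL r h1 h2
    apply hgLc
    have hdvd : (X - C ((a : L) * σ α / (n : L))) ∣ g.map σ := by
      rw [← hrc]
      exact hrd.trans ((dvd_mul_right x x).trans hx)
    exact dvd_iff_isRoot.1 hdvd
  have hsep : (g.map σ).Separable := (PerfectField.separable_iff_squarefree).2 hsq
  have hgsep : g.Separable := (Polynomial.separable_map σ).1 hsep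
  -- coprimality
  have hroot : eval ((a : ZMod p) * α / (n : ZMod p))
      (g - C (eval ((a : ZMod p) * α / (n : ZMod p)) g)) = 0 := by simp
  obtain ⟨t, ht⟩ := dvd_iff_isRoot.2 hroot
  have h2 : C (eval ((a : ZMod p) * α / (n : ZMod p)) g)⁻¹
      * C (eval ((a : ZMod p) * α / (n : ZMod p)) g) = 1 := by
    rw [← C_mul, inv_mul_cancel₀ hgc, C_1]
  have hbez : C (eval ((a : ZMod p) * α / (n : ZMod p)) g)⁻¹ * g
      + (-(C (eval ((a : ZMod p) * α / (n : ZMod p)) g)⁻¹ * t))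
        * (X - C ((a : ZMod p) * α / (n : ZMod p))) = 1 := by
    linear_combination (C (eval ((a : ZMod p) * α / (n : ZMod p)) g)⁻¹) * ht + h2
  have hiscp : IsCoprime g (X - C ((a : ZMod p) * α / (n : ZMod p))) := ⟨_, _, hbez⟩
  have hcop : IsCoprime g ((X - C ((a : ZMod p) * α / (n : ZMod p))) ^ 2) := hiscp.pow_right
  exact ⟨g, hgF, hgsep, hcop⟩
end

section
/- For the polynomial g(X, t) = X^n - tX^{n-1} - t over ℂ(t), the discriminant with respect to X equals (up to sign and a power of the leading data) n^n (-t)^{n-1} ((1/n)((n-1)t/n)^{n-1} + 1); in particular the branch points of the associated cover of the t-line are t = 0 and the n - 1 values t = M e^{(2k+1)πi/(n-1)} (k = 0, …, n-2) for a positive real constant M independent of k. -/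
open Polynomial

private lemma nonsep_iff' (m : ℕ) (t₀ : ℂ) :
    (¬ (X ^ (m+2) - C t₀ * X ^ (m+1) - C t₀ : Polynomial ℂ).Separable) ↔
      (t₀ = 0 ∨ (((m:ℂ)+1) * t₀ / ((m:ℂ)+2)) ^ (m+1) / ((m:ℂ)+2) + 1 = 0) := by
  have hN : ((m:ℂ)+2) ≠ 0 := by
    intro h; have := congrArg Complex.re h; simp at this; nlinarith [Nat.cast_nonneg (α := ℝ) m]
  have hd : derivative (X ^ (m+2) - C t₀ * X ^ (m+1) - C t₀ : Polynomial ℂ) =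
      C ((m:ℂ)+2) * X ^ (m+1) - C (((m:ℂ)+1) * t₀) * X ^ m := by
    simp [derivative_X_pow, C_ofNat]; ring
  rw [Polynomial.Separable, Polynomial.isCoprime_iff_aeval_ne_zero_of_isAlgClosed ℂ ℂ]
  push_neg
  constructor
  · rintro ⟨z, h1, h2⟩
    simp only [map_sub, map_mul, map_pow, aeval_X, aeval_C, Algebra.algebraMap_self_apply] at h1
    rw [hd] at h2
    simp only [map_sub, map_mul, map_pow, aeval_X, aeval_C, Algebra.algebraMap_self_apply] at h2
    by_cases hz : z = 0
    · subst hz; left; simpa using h1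
    · right
      have hz2 : ((m:ℂ)+2) * z - ((m:ℂ)+1) * t₀ = 0 := by
        have hzm : z ^ m ≠ 0 := pow_ne_zero _ hz
        have h3 : z ^ m * (((m:ℂ)+2) * z - ((m:ℂ)+1) * t₀) = 0 := by
          rw [← h2]; ring
        rcases mul_eq_zero.mp h3 with h | h
        · exact absurd h hzm
        · exact h
      have hzv : z = ((m:ℂ)+1) * t₀ / ((m:ℂ)+2) := by
        field_simp
        linear_combination hz2
      have hzt : z - t₀ = -t₀/((m:ℂ)+2) := by
        rw [hzv]; field_simp; ring
      have key : -t₀ * (z^(m+1)/((m:ℂ)+2)+1) = 0 := by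
        linear_combination h1 + (-(z^(m+1))) * hzt
      rcases mul_eq_zero.mp key with h | h
      · exfalso; apply hz; rw [hzv]
        have : t₀ = 0 := by simpa using h
        rw [this]; simp
      · rw [← hzv]; exact h
  · rintro (rfl | hP)
    · refine ⟨0, by simp, ?_⟩
      rw [hd]; simp
    · set z : ℂ := ((m:ℂ)+1) * t₀ / ((m:ℂ)+2) with hzdef
      have hzt : z - t₀ = -t₀/((m:ℂ)+2) := by
        rw [hzdef]; field_simp; ring
      have hz0 : ((m:ℂ)+2) * z = ((m:ℂ)+1) * t₀ := by
        rw [hzdef]; field_simp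
      refine ⟨z, ?_, ?_⟩
      · simp only [map_sub, map_mul, map_pow, aeval_X, aeval_C, Algebra.algebraMap_self_apply]
        linear_combination (-t₀) * hP + z^(m+1) * hzt
      · rw [hd]
        simp only [map_sub, map_mul, map_pow, aeval_X, aeval_C, Algebra.algebraMap_self_apply]
        linear_combination z^m * hz0

private lemma root_char' (m : ℕ) (R : ℝ) (hR : 0 < R) (t : ℂ) :
    t ^ (m+1) = -(R:ℂ)^(m+1) ↔
      ∃ k : ℕ, k < m+1 ∧ t = (R:ℂ) * Complex.exp ((2*(k:ℂ)+1) * Real.pi * Complex.I / ((m:ℂ)+1)) := by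
  have hm1 : ((m:ℂ)+1) ≠ 0 := Nat.cast_add_one_ne_zero m
  have hodd : ∀ k : ℕ, Complex.exp ((2*(k:ℂ)+1) * (Real.pi * Complex.I)) = -1 := by
    intro k
    have e : (2*(k:ℂ)+1) * (Real.pi * Complex.I) = ((2*k+1 : ℕ):ℂ) * (Real.pi * Complex.I) := by
      push_cast; ring
    rw [e, Complex.exp_nat_mul, Complex.exp_pi_mul_I]
    exact Odd.neg_one_pow ⟨k, by ring⟩
  have hpow : ∀ k : ℕ, ((R:ℂ) * Complex.exp ((2*(k:ℂ)+1) * Real.pi * Complex.I / ((m:ℂ)+1))) ^ (m+1)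
      = -(R:ℂ)^(m+1) := by
    intro k
    rw [mul_pow, ← Complex.exp_nat_mul]
    have e : ((m+1:ℕ):ℂ) * ((2*(k:ℂ)+1) * Real.pi * Complex.I / ((m:ℂ)+1)) =
        (2*(k:ℂ)+1) * (Real.pi * Complex.I) := by
      push_cast; field_simp
    rw [e, hodd k, mul_neg_one]
  constructor
  · intro h
    have hRne : (R:ℂ) ≠ 0 := by exact_mod_cast hR.ne'
    set w : ℂ := (R:ℂ) * Complex.exp ((2*((0:ℕ):ℂ)+1) * Real.pi * Complex.I / ((m:ℂ)+1)) with hw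
    have hwne : w ≠ 0 := mul_ne_zero hRne (Complex.exp_ne_zero _)
    have h2 : (t / w) ^ (m+1) = 1 := by
      rw [div_pow, h, hw, hpow 0, div_self]
      exact neg_ne_zero.mpr (pow_ne_zero _ hRne)
    obtain ⟨k, hk, hk2⟩ :=
      (Complex.isPrimitiveRoot_exp (m+1) (Nat.succ_ne_zero m)).eq_pow_of_pow_eq_one h2
    refine ⟨k, hk, ?_⟩
    push_cast at hk2
    have ht : t = w * Complex.exp (2 * (Real.pi:ℂ) * Complex.I / ((m:ℂ)+1)) ^ k := by
      rw [hk2]; field_simp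
    rw [ht, hw, mul_assoc, ← Complex.exp_nat_mul, ← Complex.exp_add]
    congr 1
    push_cast
    field_simp
    ring
  · rintro ⟨k, _, rfl⟩
    exact hpow k

/-- The discriminant computation in Lemma 4.1: for `g(X,t) = X^n - tX^{n-1} - t`, a value
`t₀ ∈ ℂ` is a branch point (i.e. `g(X,t₀)` has a repeated root, equivalently is not
separable) exactly when `n^n(-t₀)^{n-1}((1/n)((n-1)t₀/n)^{n-1} + 1) = 0`, and the branch
points are `t₀ = 0` together with the `n-1` values `M·e^{(2k+1)πi/(n-1)}`,
`k = 0, …, n-2`, for some positive real `M` independent of `k`. -/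
theorem branch_points_of_trinomial_family (n : ℕ) (hn : 2 ≤ n) :
    ∃ M : ℝ, 0 < M ∧ ∀ t₀ : ℂ,
      ((¬ (X ^ n - C t₀ * X ^ (n - 1) - C t₀ : Polynomial ℂ).Separable) ↔
        (n : ℂ) ^ n * (-t₀) ^ (n - 1) *
          ((1 / (n : ℂ)) * (((n : ℂ) - 1) * t₀ / n) ^ (n - 1) + 1) = 0) ∧
      ((¬ (X ^ n - C t₀ * X ^ (n - 1) - C t₀ : Polynomial ℂ).Separable) ↔
        (t₀ = 0 ∨ ∃ k : ℕ, k < n - 1 ∧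
          t₀ = (M : ℂ) * Complex.exp ((2 * k + 1) * Real.pi * Complex.I / ((n : ℂ) - 1)))) := by
  obtain ⟨m, rfl⟩ : ∃ m, n = m + 2 := ⟨n - 2, by omega⟩
  -- real constants
  have hm1R : (0:ℝ) < (m:ℝ)+1 := by positivity
  have hm2R : (0:ℝ) < (m:ℝ)+2 := by positivity
  set M : ℝ := ((m:ℝ)+2) ^ (((m:ℝ)+2)/((m:ℝ)+1)) / ((m:ℝ)+1) with hMdef
  have hMpos : 0 < M := by
    rw [hMdef]; positivity
  have hMpowR : M^(m+1) * ((m:ℝ)+1)^(m+1) = ((m:ℝ)+2)^(m+2) := by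
    rw [hMdef, div_pow, div_mul_cancel₀ _ (by positivity : ((m:ℝ)+1)^(m+1) ≠ 0)]
    rw [← Real.rpow_natCast (((m:ℝ)+2) ^ (((m:ℝ)+2)/((m:ℝ)+1))) (m+1),
      ← Real.rpow_mul hm2R.le]
    have e : ((m:ℝ)+2)/((m:ℝ)+1) * ((m+1:ℕ):ℝ) = ((m+2:ℕ):ℝ) := by
      push_cast; field_simp
    rw [e, Real.rpow_natCast]
  have hMC : ((M:ℂ))^(m+1) * ((m:ℂ)+1)^(m+1) = ((m:ℂ)+2)^(m+2) := by
    exact_mod_cast congrArg (Complex.ofReal) hMpowR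
  have hm1 : ((m:ℂ)+1) ≠ 0 := Nat.cast_add_one_ne_zero m
  have hN : ((m:ℂ)+2) ≠ 0 := by
    intro h; have := congrArg Complex.re h; simp at this; nlinarith [Nat.cast_nonneg (α := ℝ) m]
  refine ⟨M, hMpos, fun t₀ => ?_⟩
  -- P ↔ t₀ ^ (m+1) = -M^(m+1)
  have hPQ : ((((m:ℂ)+1) * t₀ / ((m:ℂ)+2)) ^ (m+1) / ((m:ℂ)+2) + 1 = 0) ↔
      t₀ ^ (m+1) = -((M:ℂ))^(m+1) := by
    constructor
    · intro h
      field_simp at h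
      rw [div_pow, mul_pow] at h; field_simp at h
      have h' : ((m:ℂ)+1)^(m+1) * t₀^(m+1) = ((m:ℂ)+1)^(m+1) * (-((M:ℂ))^(m+1)) := by
        linear_combination h + hMC
      exact mul_left_cancel₀ (pow_ne_zero _ hm1) h'
    · intro h
      field_simp
      rw [div_pow, mul_pow]; field_simp
      linear_combination ((m:ℂ)+1)^(m+1) * h - hMC
  have hexp : ((m+2:ℕ):ℂ) - 1 = (m:ℂ)+1 := by push_cast; ring
  have hNcast : ((m+2:ℕ):ℂ) = (m:ℂ)+2 := by push_cast; ring
  have hsub : m + 2 - 1 = m + 1 := rfl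
  rw [hsub, nonsep_iff' m t₀]
  constructor
  · have hexp2 : (m:ℂ)+2-1 = (m:ℂ)+1 := by ring
    rw [hNcast, hexp2, mul_eq_zero, mul_eq_zero]
    have hA : ¬ ((m:ℂ)+2)^(m+2) = 0 := pow_ne_zero _ hN
    simp only [hA, false_or, pow_eq_zero_iff (Nat.succ_ne_zero m), neg_eq_zero]
    have ePP : 1/((m:ℂ)+2) * (((m:ℂ)+1)*t₀/((m:ℂ)+2))^(m+1) + 1
        = (((m:ℂ)+1)*t₀/((m:ℂ)+2))^(m+1)/((m:ℂ)+2) + 1 := by ring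
    rw [ePP]
  · rw [hexp]
    exact or_congr_right (hPQ.trans (root_char' m M hMpos t₀))
end
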